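/- arXiv:1108.5001 — 2 statements merged into one kernel-verified Lean document; each statement's English description precedes it below -/
import Mathlib

section
/- Let f, g : ℝ² → ℝ be Lipschitz and suppose the pair (f, g) restricts to a self-dynamics over [r, R] with constant q (0 < q < r). Let u₀ : [0,∞) → [r+q, R−q] and v₀ : [0,∞) → [r+q, R−q] be continuous. Then: (1) there exist continuous functions u, v : [0,∞) × [0,∞) → ℝ with u(x,0) = u₀(x) and v(0,s) = v₀(s), such that for each fixed x the map s ↦ u(x,s) is differentiable with ∂u/∂s(x,s) = f(v(x,s), u(x,s)) − u(x,s), for each fixed s the map x ↦ v(x,s) is differentiable with ∂v/∂x(x,s) = g(v(x,s), u(x,s)) − v(x,s), and r + q ≤ u(x,s) ≤ R − q and r + q ≤ v(x,s) ≤ R − q for all (x,s); (2) this solution is unique: any two continuous pairs (u,v) satisfying these equations and initial conditions coincide on [0,∞) × [0,∞). -/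
open Set Filter MeasureTheory intervalIntegral Real BoundedContinuousFunction


private lemma inv_upper {φ d : ℝ → ℝ} {c q : ℝ} (hq : 0 < q)
    (hcont : Continuous φ)
    (hderiv : ∀ s : ℝ, 0 < s → HasDerivAt φ (d s) s)
    (hneg : ∀ s : ℝ, 0 < s → c ≤ φ s → d s ≤ -q)
    (h0 : φ 0 ≤ c) : ∀ s, 0 ≤ s → φ s ≤ c := by
  intro s0 hs0
  by_contra hgt
  push_neg at hgt
  have hs0' : 0 < s0 := by
    rcases hs0.lt_or_eq with h | h
    · exact h
    · exfalso; rw [← h] at hgt; linarith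
  set A : Set ℝ := Icc (0:ℝ) s0 ∩ φ ⁻¹' (Iic c) with hA
  have hclosed : IsClosed A := isClosed_Icc.inter (isClosed_Iic.preimage hcont)
  have hcomp : IsCompact A :=
    isCompact_Icc.of_isClosed_subset hclosed (fun x hx => hx.1)
  have h0A : (0:ℝ) ∈ A := ⟨⟨le_rfl, hs0⟩, by simpa using h0⟩
  have hne : A.Nonempty := ⟨0, h0A⟩
  set t := sSup A with ht
  have htA : t ∈ A := hcomp.sSup_mem hne
  have hts0 : t ≤ s0 := htA.1.2
  have ht0 : 0 ≤ t := htA.1.1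
  have hφt : φ t ≤ c := htA.2
  have htlt : t < s0 := hts0.lt_of_ne (by intro h; rw [h] at hφt; linarith)
  have hgt' : ∀ s ∈ Ioc t s0, c < φ s := by
    intro s hs
    by_contra hle
    push_neg at hle
    have : s ∈ A := ⟨⟨ht0.trans hs.1.le, hs.2⟩, hle⟩
    exact absurd (le_csSup hcomp.bddAbove this) (not_le.2 hs.1)
  have hanti : StrictAntiOn φ (Icc t s0) := by
    apply strictAntiOn_of_hasDerivWithinAt_neg (f' := d) (convex_Icc t s0)
      hcont.continuousOn
    · intro x hx
      rw [interior_Icc] at hx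
      exact (hderiv x (ht0.trans_lt hx.1)).hasDerivWithinAt
    · intro x hx
      rw [interior_Icc] at hx
      have := hneg x (ht0.trans_lt hx.1) (hgt' x ⟨hx.1, hx.2.le⟩).le
      linarith
  have := hanti (left_mem_Icc.2 hts0) (right_mem_Icc.2 hts0) htlt
  linarith

private lemma inv_lower {φ d : ℝ → ℝ} {c q : ℝ} (hq : 0 < q)
    (hcont : Continuous φ)
    (hderiv : ∀ s : ℝ, 0 < s → HasDerivAt φ (d s) s)
    (hpos : ∀ s : ℝ, 0 < s → φ s ≤ c → q ≤ d s)
    (h0 : c ≤ φ 0) : ∀ s, 0 ≤ s → c ≤ φ s := by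
  have := inv_upper (φ := fun s => -φ s) (d := fun s => -d s) (c := -c) hq
    hcont.neg (fun s hs => (hderiv s hs).neg)
    (fun s hs h => by
      have h' : -c ≤ -(φ s) := h
      have := hpos s hs (by linarith)
      show -(d s) ≤ -q
      linarith)
    (by show -(φ 0) ≤ -c; linarith)
  intro s hs
  have h' : -(φ s) ≤ -c := this s hs
  linarith

private lemma sol_integral {φ d : ℝ → ℝ}
    (hφ : ContinuousOn φ (Ici 0)) (hd : ContinuousOn d (Ici 0))
    (hderiv : ∀ s ∈ Ici (0:ℝ), HasDerivWithinAt φ (d s) (Ici 0) s) :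
    ∀ s : ℝ, 0 ≤ s → φ s = φ 0 + ∫ t in (0:ℝ)..s, d t := by
  intro s hs
  have hsub : Icc (0:ℝ) s ⊆ Ici 0 := fun x hx => hx.1
  have key := intervalIntegral.integral_eq_sub_of_hasDeriv_right_of_le hs
    (hφ.mono hsub)
    (fun x hx => (hderiv x hx.1.le).mono (fun y hy => hx.1.le.trans (le_of_lt hy)))
    ((hd.mono (by rw [uIcc_of_le hs]; exact hsub)).intervalIntegrable)
  linarith [key]

private lemma poly_int (x s : ℝ) (n : ℕ) :
    ∫ t in (0:ℝ)..s, (x + t) ^ n = ((x + s) ^ (n + 1) - x ^ (n + 1)) / (n + 1) := by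
  rw [intervalIntegral.integral_comp_add_left (fun t => t ^ n) x]
  simp [integral_pow]


private lemma picard_step {w : ℝ → ℝ} {K c z C : ℝ} {n : ℕ} (hz : 0 ≤ z) (hC : 0 ≤ C)
    (hK : 0 ≤ K) (hc : 0 ≤ c)
    (hint : IntervalIntegrable w volume 0 z)
    (hw : ∀ t ∈ Icc (0:ℝ) z, w t ≤ C * (c + t) ^ n) :
    K * ∫ t in (0:ℝ)..z, w t ≤ K * C * ((c + z) ^ (n + 1) / (n + 1)) := by
  have h2 : (∫ t in (0:ℝ)..z, w t) ≤ ∫ t in (0:ℝ)..z, C * (c + t) ^ n := by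
    apply intervalIntegral.integral_mono_on hz hint
      (Continuous.intervalIntegrable (by fun_prop) _ _) hw
  have h3 : (∫ t in (0:ℝ)..z, C * (c + t) ^ n)
      = C * (((c + z) ^ (n + 1) - c ^ (n + 1)) / (n + 1)) := by
    rw [intervalIntegral.integral_const_mul, poly_int]
  have h4 : C * (((c + z) ^ (n + 1) - c ^ (n + 1)) / (n + 1))
      ≤ C * ((c + z) ^ (n + 1) / (n + 1)) := by
    apply mul_le_mul_of_nonneg_left _ hC
    apply div_le_div_of_nonneg_right ?_ (by positivity)
    have := pow_nonneg hc (n + 1)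
    linarith
  calc K * ∫ t in (0:ℝ)..z, w t ≤ K * (C * ((c + z) ^ (n + 1) / (n + 1))) :=
        mul_le_mul_of_nonneg_left (le_trans h2 (le_of_le_of_eq (le_of_eq h3) rfl) |>.trans h4) hK
  _ = K * C * ((c + z) ^ (n + 1) / (n + 1)) := by ring

private lemma gronwall2d {Du Dv : ℝ → ℝ → ℝ} {K : ℝ} (hK : 0 ≤ K)
    (hcu : ContinuousOn (fun p : ℝ × ℝ => Du p.1 p.2) (Ici 0 ×ˢ Ici 0))
    (hcv : ContinuousOn (fun p : ℝ × ℝ => Dv p.1 p.2) (Ici 0 ×ˢ Ici 0))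
    (hu : ∀ x s : ℝ, 0 ≤ x → 0 ≤ s →
      |Du x s| ≤ K * ∫ t in (0:ℝ)..s, max |Du x t| |Dv x t|)
    (hv : ∀ x s : ℝ, 0 ≤ x → 0 ≤ s →
      |Dv x s| ≤ K * ∫ y in (0:ℝ)..x, max |Du y s| |Dv y s|) :
    ∀ x s : ℝ, 0 ≤ x → 0 ≤ s → Du x s = 0 ∧ Dv x s = 0 := by
  intro x0 s0 hx0 hs0
  set a : ℝ := max x0 s0 + 1 with ha
  have hx0a : x0 ≤ a := le_trans (le_max_left _ _) (by linarith)
  have hs0a : s0 ≤ a := le_trans (le_max_right _ _) (by linarith)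
  have ha0 : (0:ℝ) ≤ a := by positivity
  set Q : Set (ℝ × ℝ) := Icc (0:ℝ) a ×ˢ Icc (0:ℝ) a with hQ
  have hQsub : Q ⊆ Ici 0 ×ˢ Ici 0 := prod_mono Icc_subset_Ici_self Icc_subset_Ici_self
  have hWc : ContinuousOn (fun p : ℝ × ℝ => max |Du p.1 p.2| |Dv p.1 p.2|) (Ici 0 ×ˢ Ici 0) :=
    (hcu.abs).sup (hcv.abs)
  obtain ⟨M, hM⟩ := (isCompact_Icc.prod isCompact_Icc).exists_bound_of_continuousOn
    (hWc.mono hQsub)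
  have hM' : ∀ x s : ℝ, x ∈ Icc (0:ℝ) a → s ∈ Icc (0:ℝ) a →
      max |Du x s| |Dv x s| ≤ M := by
    intro x s hx hs
    have := hM (x, s) ⟨hx, hs⟩
    calc max |Du x s| |Dv x s| ≤ ‖max |Du x s| |Dv x s|‖ := le_abs_self _
    _ ≤ M := this
  -- continuity of sections
  have hsec : ∀ x ∈ Icc (0:ℝ) a, ContinuousOn (fun t => max |Du x t| |Dv x t|) (Icc (0:ℝ) a) := by
    intro x hx
    have := (hWc.mono hQsub).comp (f := fun t : ℝ => (x, t))
      ((continuous_const.prodMk continuous_id).continuousOn)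
      (fun t ht => ⟨hx, ht⟩)
    simpa [Function.comp_def] using this
  have hsec2 : ∀ s ∈ Icc (0:ℝ) a, ContinuousOn (fun y => max |Du y s| |Dv y s|) (Icc (0:ℝ) a) := by
    intro s hs
    have := (hWc.mono hQsub).comp (f := fun y : ℝ => (y, s))
      ((continuous_id.prodMk continuous_const).continuousOn)
      (fun y hy => ⟨hy, hs⟩)
    simpa [Function.comp_def] using this
  have hM0 : (0:ℝ) ≤ M :=
    (abs_nonneg (Du 0 0)).trans ((le_max_left _ _).trans (hM' 0 0 ⟨le_rfl, ha0⟩ ⟨le_rfl, ha0⟩))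
  have key : ∀ n : ℕ, ∀ x ∈ Icc (0:ℝ) a, ∀ s ∈ Icc (0:ℝ) a,
      max |Du x s| |Dv x s| ≤ M * (K * (x + s)) ^ n / n.factorial := by
    intro n
    induction n with
    | zero =>
      intro x hx s hs
      simpa using hM' x s hx hs
    | succ n ih =>
      intro x hx s hs
      have hCn : (0:ℝ) ≤ M * K ^ n / n.factorial := by positivity
      have hfac : (M * (K * (x + s)) ^ (n+1) / (n+1).factorial)
          = K * (M * K ^ n / n.factorial) * ((x + s) ^ (n+1) / (n+1)) := by
        rw [mul_pow, Nat.factorial_succ]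
        push_cast
        have : (n.factorial : ℝ) ≠ 0 := by positivity
        field_simp
        ring
      apply max_le
      · have hint : IntervalIntegrable (fun t => max |Du x t| |Dv x t|) volume 0 s :=
          ((hsec x hx).mono (by rw [uIcc_of_le hs.1]; exact Icc_subset_Icc le_rfl hs.2)).intervalIntegrable
        have hstep := picard_step (w := fun t => max |Du x t| |Dv x t|) (K := K) (c := x)
          (n := n) hs.1 hCn hK hx.1 hint
          (fun t ht => by
            have := ih x hx t ⟨ht.1, ht.2.trans hs.2⟩
            calc max |Du x t| |Dv x t| ≤ M * (K * (x + t)) ^ n / n.factorial := this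
            _ = M * K ^ n / n.factorial * (x + t) ^ n := by rw [mul_pow]; ring)
        calc |Du x s| ≤ K * ∫ t in (0:ℝ)..s, max |Du x t| |Dv x t| := hu x s hx.1 hs.1
        _ ≤ K * (M * K ^ n / n.factorial) * ((x + s) ^ (n+1) / (n+1)) := hstep
        _ = M * (K * (x + s)) ^ (n+1) / (n+1).factorial := hfac.symm
      · have hint : IntervalIntegrable (fun y => max |Du y s| |Dv y s|) volume 0 x :=
          ((hsec2 s hs).mono (by rw [uIcc_of_le hx.1]; exact Icc_subset_Icc le_rfl hx.2)).intervalIntegrable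
        have hstep := picard_step (w := fun y => max |Du y s| |Dv y s|) (K := K) (c := s)
          (n := n) hx.1 hCn hK hs.1 hint
          (fun y hy => by
            have := ih y ⟨hy.1, hy.2.trans hx.2⟩ s hs
            calc max |Du y s| |Dv y s| ≤ M * (K * (y + s)) ^ n / n.factorial := this
            _ = M * K ^ n / n.factorial * (s + y) ^ n := by rw [mul_pow, add_comm y s]; ring)
        calc |Dv x s| ≤ K * ∫ y in (0:ℝ)..x, max |Du y s| |Dv y s| := hv x s hx.1 hs.1
        _ ≤ K * (M * K ^ n / n.factorial) * ((s + x) ^ (n+1) / (n+1)) := hstep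
        _ = M * (K * (x + s)) ^ (n+1) / (n+1).factorial := by rw [add_comm s x]; exact hfac.symm
  have hxm : x0 ∈ Icc (0:ℝ) a := ⟨hx0, hx0a⟩
  have hsm : s0 ∈ Icc (0:ℝ) a := ⟨hs0, hs0a⟩
  have hlim : Tendsto (fun n : ℕ => M * (K * (x0 + s0)) ^ n / n.factorial) atTop (nhds 0) := by
    have := (FloorSemiring.tendsto_pow_div_factorial_atTop (K * (x0 + s0))).const_mul M
    simpa [mul_div_assoc] using this
  have hle : max |Du x0 s0| |Dv x0 s0| ≤ 0 :=
    ge_of_tendsto' hlim (fun n => key n x0 hxm s0 hsm)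
  constructor
  · exact abs_eq_zero.1 (le_antisymm ((le_max_left _ _).trans hle) (abs_nonneg _))
  · exact abs_eq_zero.1 (le_antisymm ((le_max_right _ _).trans hle) (abs_nonneg _))

private lemma integral_exp_mul' {lam m : ℝ} (hlam : lam ≠ 0) :
    ∫ t in (0:ℝ)..m, Real.exp (lam * t) = (Real.exp (lam * m) - 1) / lam := by
  rw [intervalIntegral.integral_comp_mul_left Real.exp hlam]
  simp [integral_exp, smul_eq_mul, div_eq_inv_mul]

private lemma int_exp_bound {h : ℝ → ℝ} {lam mx m C D : ℝ} (hm : 0 ≤ m) (hlam : 0 < lam)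
    (hint : IntervalIntegrable h volume 0 m)
    (hb : ∀ t ∈ Icc (0:ℝ) m, |h t| ≤ C + D * Real.exp (lam * (mx + t))) :
    |∫ t in (0:ℝ)..m, h t| ≤ C * m + D * Real.exp (lam * mx) * ((Real.exp (lam * m) - 1) / lam) := by
  have habs : |∫ t in (0:ℝ)..m, h t| ≤ ∫ t in (0:ℝ)..m, |h t| :=
    intervalIntegral.abs_integral_le_integral_abs hm
  have hint2 : IntervalIntegrable (fun t => C + D * Real.exp (lam * (mx + t))) volume 0 m :=
    (Continuous.intervalIntegrable (by fun_prop) _ _)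
  have h1 : (∫ t in (0:ℝ)..m, |h t|) ≤ ∫ t in (0:ℝ)..m, (C + D * Real.exp (lam * (mx + t))) :=
    intervalIntegral.integral_mono_on hm hint.abs hint2 hb
  have h2 : (∫ t in (0:ℝ)..m, (C + D * Real.exp (lam * (mx + t))))
      = C * m + D * Real.exp (lam * mx) * ((Real.exp (lam * m) - 1) / lam) := by
    have e1 : (fun t : ℝ => C + D * Real.exp (lam * (mx + t)))
        = fun t : ℝ => C + (D * Real.exp (lam * mx)) * Real.exp (lam * t) := by
      funext t; rw [mul_add, Real.exp_add]; ring
    rw [e1, intervalIntegral.integral_add (intervalIntegrable_const)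
        (Continuous.intervalIntegrable (by fun_prop) _ _),
      intervalIntegral.integral_const_mul, integral_exp_mul' hlam.ne']
    simp [smul_eq_mul]
    ring
  linarith

private lemma exp_cancel (a : ℝ) (X : ℝ) : Real.exp a * (Real.exp (-a) * X) = X := by
  rw [← mul_assoc, ← Real.exp_add]
  simp

private lemma mealy_fixed_point (F G : ℝ → ℝ → ℝ) (L : ℝ) (hL : 0 ≤ L)
    (hFc : Continuous fun p : ℝ × ℝ => F p.1 p.2)
    (hGc : Continuous fun p : ℝ × ℝ => G p.1 p.2)
    (hFlip : ∀ a b a' b' : ℝ, |F a b - F a' b'| ≤ L * max |a - a'| |b - b'|)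
    (hGlip : ∀ a b a' b' : ℝ, |G a b - G a' b'| ≤ L * max |a - a'| |b - b'|)
    (u₀ v₀ : ℝ → ℝ) (hu₀ : Continuous u₀) (hv₀ : Continuous v₀)
    (C0 : ℝ) (hu₀b : ∀ x, |u₀ x| ≤ C0) (hv₀b : ∀ s, |v₀ s| ≤ C0) :
    ∃ u v : ℝ → ℝ → ℝ,
      Continuous (fun p : ℝ × ℝ => u p.1 p.2) ∧
      Continuous (fun p : ℝ × ℝ => v p.1 p.2) ∧
      (∀ x s : ℝ, u x s = u₀ (max x 0) +
        ∫ t in (0:ℝ)..(max s 0), (F (v x t) (u x t) - u x t)) ∧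
      (∀ x s : ℝ, v x s = v₀ (max s 0) +
        ∫ y in (0:ℝ)..(max x 0), (G (v y s) (u y s) - v y s)) := by
  classical
  set lam : ℝ := 2 * (L + 1) with hlam_def
  have hlam : 0 < lam := by positivity
  have hlam1 : 1 ≤ lam := by simp only [hlam_def]; linarith
  set CF : ℝ := |F 0 0| with hCF
  set CG : ℝ := |G 0 0| with hCG
  have hC0 : 0 ≤ C0 := (abs_nonneg _).trans (hu₀b 0)
  -- the weight
  set θ : ℝ → ℝ → ℝ := fun x s => max x 0 + max s 0 with hθ
  have hθ0 : ∀ x s, 0 ≤ θ x s := fun x s => by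
    have := le_max_right x 0; have := le_max_right s 0
    simp only [hθ]; positivity
  have hθc : Continuous fun p : ℝ × ℝ => θ p.1 p.2 := by
    simp only [hθ]; fun_prop
  -- unfolded solutions
  set Uf : (BoundedContinuousFunction (ℝ × ℝ) (ℝ × ℝ)) → ℝ → ℝ → ℝ :=
    fun w x s => Real.exp (lam * θ x s) * (w (x, s)).1 with hUf
  set Vf : (BoundedContinuousFunction (ℝ × ℝ) (ℝ × ℝ)) → ℝ → ℝ → ℝ :=
    fun w x s => Real.exp (lam * θ x s) * (w (x, s)).2 with hVf
  have hUVc : ∀ w, Continuous (fun p : ℝ × ℝ => (Uf w p.1 p.2, Vf w p.1 p.2)) := by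
    intro w
    simp only [hUf, hVf]
    have h1 : Continuous fun p : ℝ × ℝ => Real.exp (lam * θ p.1 p.2) := by fun_prop
    have h2 := w.continuous
    fun_prop
  -- pointwise bounds
  have hUb : ∀ w x s, |Uf w x s| ≤ Real.exp (lam * θ x s) * ‖w‖ := by
    intro w x s
    simp only [hUf, abs_mul, abs_exp]
    refine mul_le_mul_of_nonneg_left ?_ (exp_nonneg _)
    calc |(w (x, s)).1| = ‖(w (x, s)).1‖ := (Real.norm_eq_abs _).symm
    _ ≤ ‖w (x, s)‖ := norm_fst_le _
    _ ≤ ‖w‖ := w.norm_coe_le_norm _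
  have hVb : ∀ w x s, |Vf w x s| ≤ Real.exp (lam * θ x s) * ‖w‖ := by
    intro w x s
    simp only [hVf, abs_mul, abs_exp]
    refine mul_le_mul_of_nonneg_left ?_ (exp_nonneg _)
    calc |(w (x, s)).2| = ‖(w (x, s)).2‖ := (Real.norm_eq_abs _).symm
    _ ≤ ‖w (x, s)‖ := norm_snd_le _
    _ ≤ ‖w‖ := w.norm_coe_le_norm _
  have hUd : ∀ w w' x s, |Uf w x s - Uf w' x s| ≤ Real.exp (lam * θ x s) * dist w w' := by
    intro w w' x s
    simp only [hUf]
    rw [← mul_sub, abs_mul, abs_exp]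
    refine mul_le_mul_of_nonneg_left ?_ (exp_nonneg _)
    calc |(w (x, s)).1 - (w' (x, s)).1| = dist (w (x, s)).1 (w' (x, s)).1 := (Real.dist_eq _ _).symm
    _ ≤ dist (w (x, s)) (w' (x, s)) := by rw [Prod.dist_eq]; exact le_max_left _ _
    _ ≤ dist w w' := dist_coe_le_dist _
  have hVd : ∀ w w' x s, |Vf w x s - Vf w' x s| ≤ Real.exp (lam * θ x s) * dist w w' := by
    intro w w' x s
    simp only [hVf]
    rw [← mul_sub, abs_mul, abs_exp]
    refine mul_le_mul_of_nonneg_left ?_ (exp_nonneg _)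
    calc |(w (x, s)).2 - (w' (x, s)).2| = dist (w (x, s)).2 (w' (x, s)).2 := (Real.dist_eq _ _).symm
    _ ≤ dist (w (x, s)) (w' (x, s)) := by rw [Prod.dist_eq]; exact le_max_right _ _
    _ ≤ dist w w' := dist_coe_le_dist _
  -- integrand bounds
  have hPb : ∀ w x t, |F (Vf w x t) (Uf w x t) - Uf w x t|
      ≤ CF + (L + 1) * (Real.exp (lam * θ x t) * ‖w‖) := by
    intro w x t
    have h1 : |F (Vf w x t) (Uf w x t) - F 0 0| ≤ L * max |Vf w x t| |Uf w x t| := by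
      have := hFlip (Vf w x t) (Uf w x t) 0 0
      simpa using this
    have h2 : max |Vf w x t| |Uf w x t| ≤ Real.exp (lam * θ x t) * ‖w‖ :=
      max_le (hVb w x t) (hUb w x t)
    calc |F (Vf w x t) (Uf w x t) - Uf w x t|
        ≤ |F (Vf w x t) (Uf w x t) - F 0 0| + |F 0 0| + |Uf w x t| := by
          have := abs_sub_abs_le_abs_sub (F (Vf w x t) (Uf w x t)) (F 0 0)
          have h3 := abs_sub (F (Vf w x t) (Uf w x t)) (Uf w x t)
          calc |F (Vf w x t) (Uf w x t) - Uf w x t|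
              ≤ |F (Vf w x t) (Uf w x t) - F 0 0| + |F 0 0 - Uf w x t| := by
                have := abs_sub_le (F (Vf w x t) (Uf w x t)) (F 0 0) (Uf w x t)
                linarith
          _ ≤ |F (Vf w x t) (Uf w x t) - F 0 0| + (|F 0 0| + |Uf w x t|) := by
                have := abs_sub (F 0 0) (Uf w x t)
                have h4 : |F 0 0 - Uf w x t| ≤ |F 0 0| + |Uf w x t| := abs_sub _ _
                linarith
          _ = |F (Vf w x t) (Uf w x t) - F 0 0| + |F 0 0| + |Uf w x t| := by ring
    _ ≤ L * max |Vf w x t| |Uf w x t| + CF + |Uf w x t| := by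
          simp only [hCF]; linarith
    _ ≤ CF + (L + 1) * (Real.exp (lam * θ x t) * ‖w‖) := by
          have h5 : |Uf w x t| ≤ Real.exp (lam * θ x t) * ‖w‖ := hUb w x t
          have h6 : L * max |Vf w x t| |Uf w x t| ≤ L * (Real.exp (lam * θ x t) * ‖w‖) :=
            mul_le_mul_of_nonneg_left h2 hL
          linarith
  have hQb : ∀ w y s, |G (Vf w y s) (Uf w y s) - Vf w y s|
      ≤ CG + (L + 1) * (Real.exp (lam * θ y s) * ‖w‖) := by
    intro w y s
    have h1 : |G (Vf w y s) (Uf w y s) - G 0 0| ≤ L * max |Vf w y s| |Uf w y s| := by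
      have := hGlip (Vf w y s) (Uf w y s) 0 0
      simpa using this
    have h2 : max |Vf w y s| |Uf w y s| ≤ Real.exp (lam * θ y s) * ‖w‖ :=
      max_le (hVb w y s) (hUb w y s)
    have h5 : |Vf w y s| ≤ Real.exp (lam * θ y s) * ‖w‖ := hVb w y s
    have h6 : |G (Vf w y s) (Uf w y s) - Vf w y s|
        ≤ |G (Vf w y s) (Uf w y s) - G 0 0| + |G 0 0| + |Vf w y s| := by
      have ha := abs_sub_le (G (Vf w y s) (Uf w y s)) (G 0 0) (Vf w y s)
      have hb : |G 0 0 - Vf w y s| ≤ |G 0 0| + |Vf w y s| := abs_sub _ _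
      linarith
    have h7 : L * max |Vf w y s| |Uf w y s| ≤ L * (Real.exp (lam * θ y s) * ‖w‖) :=
      mul_le_mul_of_nonneg_left h2 hL
    simp only [hCG]
    linarith
  -- continuity of sections and parametric integrals
  have hUc : ∀ w, Continuous (fun p : ℝ × ℝ => Uf w p.1 p.2) := fun w => (hUVc w).fst
  have hVc : ∀ w, Continuous (fun p : ℝ × ℝ => Vf w p.1 p.2) := fun w => (hVf ▸ (hUVc w).snd)
  have hPq : ∀ w, Continuous (fun q : (ℝ × ℝ) × ℝ =>
      F (Vf w q.1.1 q.2) (Uf w q.1.1 q.2) - Uf w q.1.1 q.2) := by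
    intro w
    have hmap : Continuous (fun q : (ℝ × ℝ) × ℝ => ((q.1.1, q.2) : ℝ × ℝ)) := by fun_prop
    have hVq : Continuous (fun q : (ℝ × ℝ) × ℝ => Vf w q.1.1 q.2) := by
      have := (hVc w).comp hmap; simpa [Function.comp_def] using this
    have hUq : Continuous (fun q : (ℝ × ℝ) × ℝ => Uf w q.1.1 q.2) := by
      have := (hUc w).comp hmap; simpa [Function.comp_def] using this
    have hFq : Continuous (fun q : (ℝ × ℝ) × ℝ => F (Vf w q.1.1 q.2) (Uf w q.1.1 q.2)) := by
      have := hFc.comp (hVq.prodMk hUq); simpa [Function.comp_def] using this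
    exact hFq.sub hUq
  have hQq : ∀ w, Continuous (fun q : (ℝ × ℝ) × ℝ =>
      G (Vf w q.2 q.1.2) (Uf w q.2 q.1.2) - Vf w q.2 q.1.2) := by
    intro w
    have hmap : Continuous (fun q : (ℝ × ℝ) × ℝ => ((q.2, q.1.2) : ℝ × ℝ)) := by fun_prop
    have hVq : Continuous (fun q : (ℝ × ℝ) × ℝ => Vf w q.2 q.1.2) := by
      have := (hVc w).comp hmap; simpa [Function.comp_def] using this
    have hUq : Continuous (fun q : (ℝ × ℝ) × ℝ => Uf w q.2 q.1.2) := by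
      have := (hUc w).comp hmap; simpa [Function.comp_def] using this
    have hGq : Continuous (fun q : (ℝ × ℝ) × ℝ => G (Vf w q.2 q.1.2) (Uf w q.2 q.1.2)) := by
      have := hGc.comp (hVq.prodMk hUq); simpa [Function.comp_def] using this
    exact hGq.sub hVq
  have hIntc1 : ∀ w, Continuous (fun p : ℝ × ℝ =>
      ∫ t in (0:ℝ)..(max p.2 0), (F (Vf w p.1 t) (Uf w p.1 t) - Uf w p.1 t)) := by
    intro w
    exact intervalIntegral.continuous_parametric_intervalIntegral_of_continuous (μ := volume)
      (f := fun (p : ℝ × ℝ) (t : ℝ) => F (Vf w p.1 t) (Uf w p.1 t) - Uf w p.1 t)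
      (by simpa [Function.uncurry_def] using hPq w) (by fun_prop)
  have hIntc2 : ∀ w, Continuous (fun p : ℝ × ℝ =>
      ∫ y in (0:ℝ)..(max p.1 0), (G (Vf w y p.2) (Uf w y p.2) - Vf w y p.2)) := by
    intro w
    exact intervalIntegral.continuous_parametric_intervalIntegral_of_continuous (μ := volume)
      (f := fun (p : ℝ × ℝ) (y : ℝ) => G (Vf w y p.2) (Uf w y p.2) - Vf w y p.2)
      (by simpa [Function.uncurry_def] using hQq w) (by fun_prop)
  -- the map Φ (unbundled)
  set Φf : BoundedContinuousFunction (ℝ × ℝ) (ℝ × ℝ) → (ℝ × ℝ) → ℝ × ℝ := fun w p =>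
    (Real.exp (-(lam * θ p.1 p.2)) * (u₀ (max p.1 0) +
      ∫ t in (0:ℝ)..(max p.2 0), (F (Vf w p.1 t) (Uf w p.1 t) - Uf w p.1 t)),
     Real.exp (-(lam * θ p.1 p.2)) * (v₀ (max p.2 0) +
      ∫ y in (0:ℝ)..(max p.1 0), (G (Vf w y p.2) (Uf w y p.2) - Vf w y p.2))) with hΦf
  have hΦfc : ∀ w, Continuous (Φf w) := by
    intro w
    simp only [hΦf]
    have h1 : Continuous fun p : ℝ × ℝ => Real.exp (-(lam * θ p.1 p.2)) := by
      have := hθc; fun_prop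
    have h2 : Continuous fun p : ℝ × ℝ => u₀ (max p.1 0) := by fun_prop
    have h3 : Continuous fun p : ℝ × ℝ => v₀ (max p.2 0) := by fun_prop
    exact ((h1.mul (h2.add (hIntc1 w))).prodMk (h1.mul (h3.add (hIntc2 w))))
  -- exponential weight estimates
  have hexp1 : ∀ x s : ℝ, Real.exp (-(lam * θ x s)) ≤ 1 := by
    intro x s
    rw [Real.exp_le_one_iff]
    have := hθ0 x s
    nlinarith
  have hexp2 : ∀ m : ℝ, 0 ≤ m → m * Real.exp (-(lam * m)) ≤ 1 := by
    intro m hm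
    have h1 : m ≤ Real.exp (lam * m) := by
      have := Real.add_one_le_exp m
      have h2 : Real.exp m ≤ Real.exp (lam * m) := by
        apply Real.exp_le_exp.2; nlinarith
      linarith
    have h3 : 0 < Real.exp (lam * m) := Real.exp_pos _
    rw [Real.exp_neg]
    calc m * (Real.exp (lam * m))⁻¹ ≤ Real.exp (lam * m) * (Real.exp (lam * m))⁻¹ := by
          gcongr
    _ = 1 := mul_inv_cancel₀ h3.ne'
  have hexp3 : ∀ x s : ℝ, Real.exp (-(lam * θ x s)) *
      (Real.exp (lam * max x 0) * ((Real.exp (lam * max s 0) - 1) / lam)) ≤ 1 / lam := by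
    intro x s
    have key : Real.exp (-(lam * θ x s)) * Real.exp (lam * max x 0)
        = Real.exp (-(lam * max s 0)) := by
      rw [← Real.exp_add]
      congr 1
      simp only [hθ]
      ring
    rw [show Real.exp (-(lam * θ x s)) * (Real.exp (lam * max x 0) *
        ((Real.exp (lam * max s 0) - 1) / lam)) = (Real.exp (-(lam * θ x s)) *
        Real.exp (lam * max x 0)) * ((Real.exp (lam * max s 0) - 1) / lam) by ring, key]
    have h4 : Real.exp (-(lam * max s 0)) * (Real.exp (lam * max s 0) - 1)
        = 1 - Real.exp (-(lam * max s 0)) := by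
      rw [mul_sub, ← Real.exp_add]
      simp
    have h5 : 0 < Real.exp (-(lam * max s 0)) := Real.exp_pos _
    calc Real.exp (-(lam * max s 0)) * ((Real.exp (lam * max s 0) - 1) / lam)
        = (Real.exp (-(lam * max s 0)) * (Real.exp (lam * max s 0) - 1)) / lam := by ring
    _ = (1 - Real.exp (-(lam * max s 0))) / lam := by rw [h4]
    _ ≤ 1 / lam := by apply div_le_div_of_nonneg_right ?_ hlam.le; linarith
  have hCF0 : 0 ≤ CF := abs_nonneg _
  have hCG0 : 0 ≤ CG := abs_nonneg _
  have hexp2' : ∀ x s : ℝ, (max s 0) * Real.exp (-(lam * θ x s)) ≤ 1 := by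
    intro x s
    have hm : (0:ℝ) ≤ max s 0 := le_max_right _ _
    have hmx : (0:ℝ) ≤ max x 0 := le_max_right _ _
    have h1 : Real.exp (-(lam * θ x s)) ≤ Real.exp (-(lam * max s 0)) := by
      apply Real.exp_le_exp.2
      have h2 : max s 0 ≤ θ x s := by simp only [hθ]; linarith
      nlinarith
    calc (max s 0) * Real.exp (-(lam * θ x s)) ≤ (max s 0) * Real.exp (-(lam * max s 0)) :=
          mul_le_mul_of_nonneg_left h1 hm
    _ ≤ 1 := hexp2 _ hm
  -- continuity of sections
  have hUsec : ∀ w x, Continuous fun t : ℝ => Uf w x t := by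
    intro w x
    have := (hUc w).comp ((continuous_const.prodMk continuous_id) : Continuous fun t : ℝ => ((x, t) : ℝ × ℝ))
    simpa [Function.comp_def] using this
  have hVsec : ∀ w x, Continuous fun t : ℝ => Vf w x t := by
    intro w x
    have := (hVc w).comp ((continuous_const.prodMk continuous_id) : Continuous fun t : ℝ => ((x, t) : ℝ × ℝ))
    simpa [Function.comp_def] using this
  have hUsec2 : ∀ w s, Continuous fun y : ℝ => Uf w y s := by
    intro w s
    have := (hUc w).comp ((continuous_id.prodMk continuous_const) : Continuous fun y : ℝ => ((y, s) : ℝ × ℝ))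
    simpa [Function.comp_def] using this
  have hVsec2 : ∀ w s, Continuous fun y : ℝ => Vf w y s := by
    intro w s
    have := (hVc w).comp ((continuous_id.prodMk continuous_const) : Continuous fun y : ℝ => ((y, s) : ℝ × ℝ))
    simpa [Function.comp_def] using this
  have hPsec : ∀ w x, Continuous fun t : ℝ => F (Vf w x t) (Uf w x t) - Uf w x t := by
    intro w x
    have h1 := hFc.comp ((hVsec w x).prodMk (hUsec w x))
    exact (by simpa [Function.comp_def] using h1 : Continuous fun t : ℝ => F (Vf w x t) (Uf w x t)).sub (hUsec w x)
  have hQsec : ∀ w s, Continuous fun y : ℝ => G (Vf w y s) (Uf w y s) - Vf w y s := by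
    intro w s
    have h1 := hGc.comp ((hVsec2 w s).prodMk (hUsec2 w s))
    exact (by simpa [Function.comp_def] using h1 : Continuous fun y : ℝ => G (Vf w y s) (Uf w y s)).sub (hVsec2 w s)
  -- integral bounds
  have hIb1 : ∀ w x s, |∫ t in (0:ℝ)..(max s 0), (F (Vf w x t) (Uf w x t) - Uf w x t)|
      ≤ CF * (max s 0) + ((L + 1) * ‖w‖) * Real.exp (lam * max x 0) *
        ((Real.exp (lam * max s 0) - 1) / lam) := by
    intro w x s
    apply int_exp_bound (le_max_right _ _) hlam ((hPsec w x).intervalIntegrable _ _)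
    intro t ht
    have h := hPb w x t
    have hθeq : θ x t = max x 0 + t := by simp only [hθ, max_eq_left ht.1]
    rw [hθeq] at h
    calc |F (Vf w x t) (Uf w x t) - Uf w x t|
        ≤ CF + (L + 1) * (Real.exp (lam * (max x 0 + t)) * ‖w‖) := h
    _ = CF + (L + 1) * ‖w‖ * Real.exp (lam * (max x 0 + t)) := by ring
  have hIb2 : ∀ w x s, |∫ y in (0:ℝ)..(max x 0), (G (Vf w y s) (Uf w y s) - Vf w y s)|
      ≤ CG * (max x 0) + ((L + 1) * ‖w‖) * Real.exp (lam * max s 0) *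
        ((Real.exp (lam * max x 0) - 1) / lam) := by
    intro w x s
    apply int_exp_bound (le_max_right _ _) hlam ((hQsec w s).intervalIntegrable _ _)
    intro y hy
    have h := hQb w y s
    have hθeq : θ y s = max s 0 + y := by simp only [hθ, max_eq_left hy.1]; ring
    rw [hθeq] at h
    calc |G (Vf w y s) (Uf w y s) - Vf w y s|
        ≤ CG + (L + 1) * (Real.exp (lam * (max s 0 + y)) * ‖w‖) := h
    _ = CG + (L + 1) * ‖w‖ * Real.exp (lam * (max s 0 + y)) := by ring
  have hlamle : ∀ D : ℝ, 0 ≤ D → D * (1 / lam) ≤ D := by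
    intro D hD
    rw [mul_one_div]
    exact div_le_self hD hlam1
  have hΦb1 : ∀ w p, |(Φf w p).1| ≤ C0 + CF + (L + 1) * ‖w‖ := by
    intro w p
    obtain ⟨x, s⟩ := p
    have hIb := hIb1 w x s
    have h2 : |u₀ (max x 0) + ∫ t in (0:ℝ)..(max s 0), (F (Vf w x t) (Uf w x t) - Uf w x t)|
        ≤ C0 + |∫ t in (0:ℝ)..(max s 0), (F (Vf w x t) (Uf w x t) - Uf w x t)| :=
      (abs_add_le _ _).trans (by linarith [hu₀b (max x 0)])
    have hE : 0 ≤ Real.exp (-(lam * θ x s)) := (Real.exp_pos _).le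
    have h1 : |(Φf w (x, s)).1| = Real.exp (-(lam * θ x s)) *
        |u₀ (max x 0) + ∫ t in (0:ℝ)..(max s 0), (F (Vf w x t) (Uf w x t) - Uf w x t)| := by
      simp only [hΦf]; rw [abs_mul, abs_exp]
    rw [h1]
    calc Real.exp (-(lam * θ x s)) *
        |u₀ (max x 0) + ∫ t in (0:ℝ)..(max s 0), (F (Vf w x t) (Uf w x t) - Uf w x t)|
        ≤ Real.exp (-(lam * θ x s)) * (C0 + (CF * (max s 0) + ((L + 1) * ‖w‖) *
            Real.exp (lam * max x 0) * ((Real.exp (lam * max s 0) - 1) / lam))) := by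
          apply mul_le_mul_of_nonneg_left _ hE
          linarith
    _ = C0 * Real.exp (-(lam * θ x s)) + CF * ((max s 0) * Real.exp (-(lam * θ x s)))
        + ((L + 1) * ‖w‖) * (Real.exp (-(lam * θ x s)) * (Real.exp (lam * max x 0) *
            ((Real.exp (lam * max s 0) - 1) / lam))) := by ring
    _ ≤ C0 * 1 + CF * 1 + ((L + 1) * ‖w‖) * (1 / lam) := by
          have e1 := hexp1 x s
          have e2 := hexp2' x s
          have e3 := hexp3 x s
          have hD : (0:ℝ) ≤ (L + 1) * ‖w‖ := by positivity
          have t1 : C0 * Real.exp (-(lam * θ x s)) ≤ C0 * 1 := mul_le_mul_of_nonneg_left e1 hC0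
          have t2 : CF * ((max s 0) * Real.exp (-(lam * θ x s))) ≤ CF * 1 :=
            mul_le_mul_of_nonneg_left e2 hCF0
          have t3 : ((L + 1) * ‖w‖) * (Real.exp (-(lam * θ x s)) * (Real.exp (lam * max x 0) *
              ((Real.exp (lam * max s 0) - 1) / lam))) ≤ ((L + 1) * ‖w‖) * (1 / lam) :=
            mul_le_mul_of_nonneg_left e3 hD
          linarith
    _ ≤ C0 + CF + (L + 1) * ‖w‖ := by
          have := hlamle ((L + 1) * ‖w‖) (by positivity)
          linarith
  have hθsymm : ∀ x s : ℝ, θ s x = θ x s := by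
    intro x s; simp only [hθ]; ring
  have hΦb2 : ∀ w p, |(Φf w p).2| ≤ C0 + CG + (L + 1) * ‖w‖ := by
    intro w p
    obtain ⟨x, s⟩ := p
    have hIb := hIb2 w x s
    have h2 : |v₀ (max s 0) + ∫ y in (0:ℝ)..(max x 0), (G (Vf w y s) (Uf w y s) - Vf w y s)|
        ≤ C0 + |∫ y in (0:ℝ)..(max x 0), (G (Vf w y s) (Uf w y s) - Vf w y s)| :=
      (abs_add_le _ _).trans (by linarith [hv₀b (max s 0)])
    have hE : 0 ≤ Real.exp (-(lam * θ x s)) := (Real.exp_pos _).le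
    have h1 : |(Φf w (x, s)).2| = Real.exp (-(lam * θ x s)) *
        |v₀ (max s 0) + ∫ y in (0:ℝ)..(max x 0), (G (Vf w y s) (Uf w y s) - Vf w y s)| := by
      simp only [hΦf]; rw [abs_mul, abs_exp]
    rw [h1]
    have e1 := hexp1 x s
    have e2 : (max x 0) * Real.exp (-(lam * θ x s)) ≤ 1 := by
      have := hexp2' s x; rwa [hθsymm x s] at this
    have e3 : Real.exp (-(lam * θ x s)) * (Real.exp (lam * max s 0) *
        ((Real.exp (lam * max x 0) - 1) / lam)) ≤ 1 / lam := by
      have := hexp3 s x; rwa [hθsymm x s] at this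
    calc Real.exp (-(lam * θ x s)) *
        |v₀ (max s 0) + ∫ y in (0:ℝ)..(max x 0), (G (Vf w y s) (Uf w y s) - Vf w y s)|
        ≤ Real.exp (-(lam * θ x s)) * (C0 + (CG * (max x 0) + ((L + 1) * ‖w‖) *
            Real.exp (lam * max s 0) * ((Real.exp (lam * max x 0) - 1) / lam))) := by
          apply mul_le_mul_of_nonneg_left _ hE
          linarith
    _ = C0 * Real.exp (-(lam * θ x s)) + CG * ((max x 0) * Real.exp (-(lam * θ x s)))
        + ((L + 1) * ‖w‖) * (Real.exp (-(lam * θ x s)) * (Real.exp (lam * max s 0) *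
            ((Real.exp (lam * max x 0) - 1) / lam))) := by ring
    _ ≤ C0 * 1 + CG * 1 + ((L + 1) * ‖w‖) * (1 / lam) := by
          have hD : (0:ℝ) ≤ (L + 1) * ‖w‖ := by positivity
          have t1 : C0 * Real.exp (-(lam * θ x s)) ≤ C0 * 1 := mul_le_mul_of_nonneg_left e1 hC0
          have t2 : CG * ((max x 0) * Real.exp (-(lam * θ x s))) ≤ CG * 1 :=
            mul_le_mul_of_nonneg_left e2 hCG0
          have t3 := mul_le_mul_of_nonneg_left e3 hD
          linarith
    _ ≤ C0 + CG + (L + 1) * ‖w‖ := by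
          have := hlamle ((L + 1) * ‖w‖) (by positivity)
          linarith
  -- bundle Φ
  set Φ : (ℝ × ℝ →ᵇ ℝ × ℝ) → (ℝ × ℝ →ᵇ ℝ × ℝ) := fun w =>
    BoundedContinuousFunction.ofNormedAddCommGroup (Φf w) (hΦfc w)
      (C0 + CF + CG + (L + 1) * ‖w‖) (by
        intro p
        rw [Prod.norm_def]
        apply max_le
        · rw [Real.norm_eq_abs]
          have := hΦb1 w p
          linarith
        · rw [Real.norm_eq_abs]
          have := hΦb2 w p
          linarith) with hΦ
  have hΦcoe : ∀ w p, (Φ w) p = Φf w p := by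
    intro w p
    simp only [hΦ, BoundedContinuousFunction.coe_ofNormedAddCommGroup]
  -- difference bounds for the integrals
  have hPd : ∀ w w' x t, |(F (Vf w x t) (Uf w x t) - Uf w x t)
      - (F (Vf w' x t) (Uf w' x t) - Uf w' x t)|
      ≤ (L + 1) * dist w w' * Real.exp (lam * θ x t) := by
    intro w w' x t
    have h1 : |F (Vf w x t) (Uf w x t) - F (Vf w' x t) (Uf w' x t)|
        ≤ L * max |Vf w x t - Vf w' x t| |Uf w x t - Uf w' x t| := hFlip _ _ _ _
    have h2 : max |Vf w x t - Vf w' x t| |Uf w x t - Uf w' x t|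
        ≤ Real.exp (lam * θ x t) * dist w w' := max_le (hVd w w' x t) (hUd w w' x t)
    have h3 := hUd w w' x t
    have habs : |(F (Vf w x t) (Uf w x t) - Uf w x t) - (F (Vf w' x t) (Uf w' x t) - Uf w' x t)|
        ≤ |F (Vf w x t) (Uf w x t) - F (Vf w' x t) (Uf w' x t)| + |Uf w x t - Uf w' x t| := by
      have : (F (Vf w x t) (Uf w x t) - Uf w x t) - (F (Vf w' x t) (Uf w' x t) - Uf w' x t)
          = (F (Vf w x t) (Uf w x t) - F (Vf w' x t) (Uf w' x t)) - (Uf w x t - Uf w' x t) := by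
        ring
      rw [this]
      exact abs_sub _ _
    have h4 : L * max |Vf w x t - Vf w' x t| |Uf w x t - Uf w' x t|
        ≤ L * (Real.exp (lam * θ x t) * dist w w') := mul_le_mul_of_nonneg_left h2 hL
    have h5 : |Uf w x t - Uf w' x t| ≤ Real.exp (lam * θ x t) * dist w w' := h3
    calc |(F (Vf w x t) (Uf w x t) - Uf w x t) - (F (Vf w' x t) (Uf w' x t) - Uf w' x t)|
        ≤ L * (Real.exp (lam * θ x t) * dist w w') + Real.exp (lam * θ x t) * dist w w' := by
          linarith
    _ = (L + 1) * dist w w' * Real.exp (lam * θ x t) := by ring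
  have hQd : ∀ w w' y s, |(G (Vf w y s) (Uf w y s) - Vf w y s)
      - (G (Vf w' y s) (Uf w' y s) - Vf w' y s)|
      ≤ (L + 1) * dist w w' * Real.exp (lam * θ y s) := by
    intro w w' y s
    have h1 : |G (Vf w y s) (Uf w y s) - G (Vf w' y s) (Uf w' y s)|
        ≤ L * max |Vf w y s - Vf w' y s| |Uf w y s - Uf w' y s| := hGlip _ _ _ _
    have h2 : max |Vf w y s - Vf w' y s| |Uf w y s - Uf w' y s|
        ≤ Real.exp (lam * θ y s) * dist w w' := max_le (hVd w w' y s) (hUd w w' y s)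
    have h3 := hVd w w' y s
    have habs : |(G (Vf w y s) (Uf w y s) - Vf w y s) - (G (Vf w' y s) (Uf w' y s) - Vf w' y s)|
        ≤ |G (Vf w y s) (Uf w y s) - G (Vf w' y s) (Uf w' y s)| + |Vf w y s - Vf w' y s| := by
      have : (G (Vf w y s) (Uf w y s) - Vf w y s) - (G (Vf w' y s) (Uf w' y s) - Vf w' y s)
          = (G (Vf w y s) (Uf w y s) - G (Vf w' y s) (Uf w' y s)) - (Vf w y s - Vf w' y s) := by
        ring
      rw [this]
      exact abs_sub _ _
    have h4 := mul_le_mul_of_nonneg_left h2 hL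
    calc |(G (Vf w y s) (Uf w y s) - Vf w y s) - (G (Vf w' y s) (Uf w' y s) - Vf w' y s)|
        ≤ L * (Real.exp (lam * θ y s) * dist w w') + Real.exp (lam * θ y s) * dist w w' := by
          linarith
    _ = (L + 1) * dist w w' * Real.exp (lam * θ y s) := by ring
  -- contraction estimate
  have hcontr : ContractingWith (1/2 : NNReal) Φ := by
    constructor
    · rw [show (1/2 : NNReal) = 2⁻¹ by norm_num]
      exact inv_lt_one_of_one_lt₀ one_lt_two
    · apply LipschitzWith.of_dist_le_mul
      intro w w'
      have hhalf : ((1/2 : NNReal) : ℝ) = 1/2 := by norm_num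
      rw [hhalf]
      have hd0 : 0 ≤ dist w w' := dist_nonneg
      apply (BoundedContinuousFunction.dist_le (by positivity)).2
      intro p
      obtain ⟨x, s⟩ := p
      rw [hΦcoe w (x, s), hΦcoe w' (x, s), Prod.dist_eq]
      have hE : 0 ≤ Real.exp (-(lam * θ x s)) := (Real.exp_pos _).le
      have hhalfd : (L + 1) * dist w w' * (1 / lam) = 1 / 2 * dist w w' := by
        simp only [hlam_def]
        have : L + 1 ≠ 0 := by positivity
        field_simp
      apply max_le
      · -- first components
        rw [Real.dist_eq]
        have hsub : (Φf w (x, s)).1 - (Φf w' (x, s)).1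
            = Real.exp (-(lam * θ x s)) *
              ∫ t in (0:ℝ)..(max s 0), ((F (Vf w x t) (Uf w x t) - Uf w x t)
                - (F (Vf w' x t) (Uf w' x t) - Uf w' x t)) := by
          simp only [hΦf]
          rw [intervalIntegral.integral_sub ((hPsec w x).intervalIntegrable _ _)
            ((hPsec w' x).intervalIntegrable _ _)]
          ring
        rw [hsub, abs_mul, abs_exp]
        have hIb : |∫ t in (0:ℝ)..(max s 0), ((F (Vf w x t) (Uf w x t) - Uf w x t)
            - (F (Vf w' x t) (Uf w' x t) - Uf w' x t))|
            ≤ 0 * (max s 0) + ((L + 1) * dist w w') * Real.exp (lam * max x 0) *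
              ((Real.exp (lam * max s 0) - 1) / lam) := by
          apply int_exp_bound (le_max_right _ _) hlam
            (((hPsec w x).sub (hPsec w' x)).intervalIntegrable _ _)
          intro t ht
          have h := hPd w w' x t
          have hθeq : θ x t = max x 0 + t := by simp only [hθ, max_eq_left ht.1]
          rw [hθeq] at h
          calc |(F (Vf w x t) (Uf w x t) - Uf w x t) - (F (Vf w' x t) (Uf w' x t) - Uf w' x t)|
              ≤ (L + 1) * dist w w' * Real.exp (lam * (max x 0 + t)) := h
          _ = 0 + (L + 1) * dist w w' * Real.exp (lam * (max x 0 + t)) := by ring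
        have e3 := hexp3 x s
        have hD : (0:ℝ) ≤ (L + 1) * dist w w' := by positivity
        calc Real.exp (-(lam * θ x s)) * |∫ t in (0:ℝ)..(max s 0),
              ((F (Vf w x t) (Uf w x t) - Uf w x t) - (F (Vf w' x t) (Uf w' x t) - Uf w' x t))|
            ≤ Real.exp (-(lam * θ x s)) * (((L + 1) * dist w w') * Real.exp (lam * max x 0) *
              ((Real.exp (lam * max s 0) - 1) / lam)) := by
              apply mul_le_mul_of_nonneg_left _ hE
              linarith
        _ = ((L + 1) * dist w w') * (Real.exp (-(lam * θ x s)) * (Real.exp (lam * max x 0) *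
              ((Real.exp (lam * max s 0) - 1) / lam))) := by ring
        _ ≤ ((L + 1) * dist w w') * (1 / lam) := mul_le_mul_of_nonneg_left e3 hD
        _ = 1 / 2 * dist w w' := hhalfd
      · -- second components
        rw [Real.dist_eq]
        have hsub : (Φf w (x, s)).2 - (Φf w' (x, s)).2
            = Real.exp (-(lam * θ x s)) *
              ∫ y in (0:ℝ)..(max x 0), ((G (Vf w y s) (Uf w y s) - Vf w y s)
                - (G (Vf w' y s) (Uf w' y s) - Vf w' y s)) := by
          simp only [hΦf]
          rw [intervalIntegral.integral_sub ((hQsec w s).intervalIntegrable _ _)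
            ((hQsec w' s).intervalIntegrable _ _)]
          ring
        rw [hsub, abs_mul, abs_exp]
        have hIb : |∫ y in (0:ℝ)..(max x 0), ((G (Vf w y s) (Uf w y s) - Vf w y s)
            - (G (Vf w' y s) (Uf w' y s) - Vf w' y s))|
            ≤ 0 * (max x 0) + ((L + 1) * dist w w') * Real.exp (lam * max s 0) *
              ((Real.exp (lam * max x 0) - 1) / lam) := by
          apply int_exp_bound (le_max_right _ _) hlam
            (((hQsec w s).sub (hQsec w' s)).intervalIntegrable _ _)
          intro y hy
          have h := hQd w w' y s
          have hθeq : θ y s = max s 0 + y := by simp only [hθ, max_eq_left hy.1]; ring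
          rw [hθeq] at h
          calc |(G (Vf w y s) (Uf w y s) - Vf w y s) - (G (Vf w' y s) (Uf w' y s) - Vf w' y s)|
              ≤ (L + 1) * dist w w' * Real.exp (lam * (max s 0 + y)) := h
          _ = 0 + (L + 1) * dist w w' * Real.exp (lam * (max s 0 + y)) := by ring
        have e3 : Real.exp (-(lam * θ x s)) * (Real.exp (lam * max s 0) *
            ((Real.exp (lam * max x 0) - 1) / lam)) ≤ 1 / lam := by
          have := hexp3 s x; rwa [hθsymm x s] at this
        have hD : (0:ℝ) ≤ (L + 1) * dist w w' := by positivity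
        calc Real.exp (-(lam * θ x s)) * |∫ y in (0:ℝ)..(max x 0),
              ((G (Vf w y s) (Uf w y s) - Vf w y s) - (G (Vf w' y s) (Uf w' y s) - Vf w' y s))|
            ≤ Real.exp (-(lam * θ x s)) * (((L + 1) * dist w w') * Real.exp (lam * max s 0) *
              ((Real.exp (lam * max x 0) - 1) / lam)) := by
              apply mul_le_mul_of_nonneg_left _ hE
              linarith
        _ = ((L + 1) * dist w w') * (Real.exp (-(lam * θ x s)) * (Real.exp (lam * max s 0) *
              ((Real.exp (lam * max x 0) - 1) / lam))) := by ring
        _ ≤ ((L + 1) * dist w w') * (1 / lam) := mul_le_mul_of_nonneg_left e3 hD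
        _ = 1 / 2 * dist w w' := hhalfd
  -- fixed point
  haveI : Nonempty (ℝ × ℝ →ᵇ ℝ × ℝ) := ⟨0⟩
  set wst : ℝ × ℝ →ᵇ ℝ × ℝ := ContractingWith.fixedPoint Φ hcontr with hwst
  have hfix : Φ wst = wst := hcontr.fixedPoint_isFixedPt
  refine ⟨Uf wst, Vf wst, (hUVc wst).fst, (hUVc wst).snd, ?_, ?_⟩
  · intro x s
    have hp : (Φf wst (x, s)).1 = (wst (x, s)).1 := by
      rw [← hΦcoe wst (x, s), hfix]
    show Uf wst x s = _
    simp only [hUf]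
    rw [← hp]
    simp only [hΦf]
    exact exp_cancel _ _
  · intro x s
    have hp : (Φf wst (x, s)).2 = (wst (x, s)).2 := by
      rw [← hΦcoe wst (x, s), hfix]
    show Vf wst x s = _
    simp only [hVf]
    rw [← hp]
    simp only [hΦf]
    exact exp_cancel _ _
/-- `(f, g)` restricts to a self-dynamics over `[r, R]` with constant `q`. -/
def RestrictsToSelfDynamics (f g : ℝ → ℝ → ℝ) (r R q : ℝ) : Prop :=
  0 < q ∧ q < r ∧
  (∀ a b : ℝ, 0 < a → b ≤ r + q → q ≤ f a b - b ∧ q ≤ g b a - b) ∧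
  (∀ a b : ℝ, 0 < a → R - q ≤ b → f a b - b ≤ -q ∧ g b a - b ≤ -q) ∧
  (∀ a b : ℝ, 0 < a → r ≤ b → b ≤ R → |f a b - b| ≤ R - r ∧ |g b a - b| ≤ R - r)

/-- `(u, v)` is a (continuous) solution of the hyperbolic Mealy system
`∂u/∂s = f(v,u) − u`, `∂v/∂x = g(v,u) − v` on `[0,∞) × [0,∞)` with initial
values `u(·,0) = u₀` and `v(0,·) = v₀`. -/
def IsMealySolution (f g : ℝ → ℝ → ℝ) (u₀ v₀ : ℝ → ℝ) (u v : ℝ → ℝ → ℝ) : Prop :=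
  ContinuousOn (fun pt : ℝ × ℝ => u pt.1 pt.2) (Set.Ici 0 ×ˢ Set.Ici 0) ∧
  ContinuousOn (fun pt : ℝ × ℝ => v pt.1 pt.2) (Set.Ici 0 ×ˢ Set.Ici 0) ∧
  (∀ x : ℝ, 0 ≤ x → u x 0 = u₀ x) ∧
  (∀ s : ℝ, 0 ≤ s → v 0 s = v₀ s) ∧
  (∀ x : ℝ, 0 ≤ x → ∀ s : ℝ, 0 ≤ s →
    HasDerivWithinAt (fun s' => u x s') (f (v x s) (u x s) - u x s) (Set.Ici 0) s) ∧
  (∀ x : ℝ, 0 ≤ x → ∀ s : ℝ, 0 ≤ s →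
    HasDerivWithinAt (fun x' => v x' s) (g (v x s) (u x s) - v x s) (Set.Ici 0) x)

/-- existence, bounds and uniqueness for the hyperbolic Mealy system when
`(f, g)` is Lipschitz and restricts to a self-dynamics over `[r, R]`. -/
theorem statement18 (f g : ℝ → ℝ → ℝ)
    (hf : ∃ L : NNReal, LipschitzWith L (Function.uncurry f))
    (hg : ∃ L : NNReal, LipschitzWith L (Function.uncurry g))
    (r R q : ℝ) (hself : RestrictsToSelfDynamics f g r R q)
    (u₀ v₀ : ℝ → ℝ)
    (hu₀ : ContinuousOn u₀ (Set.Ici 0)) (hv₀ : ContinuousOn v₀ (Set.Ici 0))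
    (hu₀r : ∀ x : ℝ, 0 ≤ x → u₀ x ∈ Set.Icc (r + q) (R - q))
    (hv₀r : ∀ s : ℝ, 0 ≤ s → v₀ s ∈ Set.Icc (r + q) (R - q)) :
    (∃ u v : ℝ → ℝ → ℝ, IsMealySolution f g u₀ v₀ u v ∧
      ∀ x : ℝ, 0 ≤ x → ∀ s : ℝ, 0 ≤ s →
        u x s ∈ Set.Icc (r + q) (R - q) ∧ v x s ∈ Set.Icc (r + q) (R - q)) ∧
    (∀ u1 v1 u2 v2 : ℝ → ℝ → ℝ,
      IsMealySolution f g u₀ v₀ u1 v1 → IsMealySolution f g u₀ v₀ u2 v2 →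
      ∀ x : ℝ, 0 ≤ x → ∀ s : ℝ, 0 ≤ s → u1 x s = u2 x s ∧ v1 x s = v2 x s) := by
  obtain ⟨hq, hqr, h1, h2, _h3⟩ := hself
  obtain ⟨Lf, hLf⟩ := hf
  obtain ⟨Lg, hLg⟩ := hg
  set L : ℝ := max (Lf : ℝ) (Lg : ℝ) with hLdef
  have hL0 : 0 ≤ L := le_trans Lf.coe_nonneg (le_max_left _ _)
  have hfc : Continuous fun p : ℝ × ℝ => f p.1 p.2 := by
    have := hLf.continuous
    simpa [Function.uncurry_def] using this
  have hgc : Continuous fun p : ℝ × ℝ => g p.1 p.2 := by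
    have := hLg.continuous
    simpa [Function.uncurry_def] using this
  have hfL : ∀ a b a' b' : ℝ, |f a b - f a' b'| ≤ (Lf : ℝ) * max |a - a'| |b - b'| := by
    intro a b a' b'
    have := hLf.dist_le_mul (a, b) (a', b')
    simpa [Function.uncurry, Prod.dist_eq, Real.dist_eq] using this
  have hgL : ∀ a b a' b' : ℝ, |g a b - g a' b'| ≤ (Lg : ℝ) * max |a - a'| |b - b'| := by
    intro a b a' b'
    have := hLg.dist_le_mul (a, b) (a', b')
    simpa [Function.uncurry, Prod.dist_eq, Real.dist_eq] using this
  have hrq : 0 < r + q := by linarith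
  have hRr : r + q ≤ R - q := le_trans (hu₀r 0 le_rfl).1 (hu₀r 0 le_rfl).2
  -- the clamping function
  set clamp : ℝ → ℝ := fun a => max (r + q) (min a (R - q)) with hclampdef
  have hclamp_mem : ∀ a, clamp a ∈ Icc (r + q) (R - q) := by
    intro a
    constructor
    · exact le_max_left _ _
    · simp only [hclampdef]
      exact max_le hRr (min_le_right _ _)
  have hclamp_pos : ∀ a, 0 < clamp a := fun a => lt_of_lt_of_le hrq (hclamp_mem a).1
  have hclamp_eq : ∀ a, a ∈ Icc (r + q) (R - q) → clamp a = a := by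
    intro a ha
    simp only [hclampdef]
    rw [min_eq_left ha.2, max_eq_right ha.1]
  have hclamp_lip : ∀ a a', |clamp a - clamp a'| ≤ |a - a'| := by
    intro a a'
    simp only [hclampdef]
    calc |max (r + q) (min a (R - q)) - max (r + q) (min a' (R - q))|
        = |max (min a (R - q)) (r + q) - max (min a' (R - q)) (r + q)| := by
          rw [max_comm (r + q), max_comm (r + q)]
    _ ≤ |min a (R - q) - min a' (R - q)| := abs_max_sub_max_le_abs _ _ _
    _ ≤ |a - a'| := by simpa using abs_min_sub_min_le_max a (R - q) a' (R - q)
  have hclamp_cont : Continuous clamp := by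
    simp only [hclampdef]; fun_prop
  -- truncated vector fields
  set Fc : ℝ → ℝ → ℝ := fun a b => f (clamp a) b with hFcdef
  set Gc : ℝ → ℝ → ℝ := fun a b => g a (clamp b) with hGcdef
  have hFcC : Continuous fun p : ℝ × ℝ => Fc p.1 p.2 := by
    have := hfc.comp ((hclamp_cont.comp continuous_fst).prodMk continuous_snd)
    simpa [hFcdef, Function.comp_def] using this
  have hGcC : Continuous fun p : ℝ × ℝ => Gc p.1 p.2 := by
    have := hgc.comp (continuous_fst.prodMk (hclamp_cont.comp continuous_snd))
    simpa [hGcdef, Function.comp_def] using this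
  have hFcL : ∀ a b a' b' : ℝ, |Fc a b - Fc a' b'| ≤ L * max |a - a'| |b - b'| := by
    intro a b a' b'
    calc |Fc a b - Fc a' b'| ≤ (Lf : ℝ) * max |clamp a - clamp a'| |b - b'| := hfL _ _ _ _
    _ ≤ L * max |a - a'| |b - b'| := by
        apply mul_le_mul (le_max_left _ _) (max_le_max (hclamp_lip a a') le_rfl)
          (le_max_of_le_right (abs_nonneg _)) hL0
  have hGcL : ∀ a b a' b' : ℝ, |Gc a b - Gc a' b'| ≤ L * max |a - a'| |b - b'| := by
    intro a b a' b'
    calc |Gc a b - Gc a' b'| ≤ (Lg : ℝ) * max |a - a'| |clamp b - clamp b'| := hgL _ _ _ _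
    _ ≤ L * max |a - a'| |b - b'| := by
        apply mul_le_mul (le_max_right _ _) (max_le_max le_rfl (hclamp_lip b b'))
          (le_max_of_le_left (abs_nonneg _)) hL0
  -- extended initial data
  set ub : ℝ → ℝ := fun x => u₀ (max x 0) with hubdef
  set vb : ℝ → ℝ := fun s => v₀ (max s 0) with hvbdef
  have hub_cont : Continuous ub :=
    hu₀.comp_continuous (continuous_id.max continuous_const)
      (fun x => mem_Ici.2 (le_max_right _ _))
  have hvb_cont : Continuous vb :=
    hv₀.comp_continuous (continuous_id.max continuous_const)
      (fun s => mem_Ici.2 (le_max_right _ _))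
  set C0 : ℝ := max |r + q| |R - q| with hC0def
  have hub_b : ∀ x, |ub x| ≤ C0 := by
    intro x
    have h := hu₀r (max x 0) (le_max_right _ _)
    exact abs_le_max_abs_abs h.1 h.2
  have hvb_b : ∀ s, |vb s| ≤ C0 := by
    intro s
    have h := hv₀r (max s 0) (le_max_right _ _)
    exact abs_le_max_abs_abs h.1 h.2
  -- the fixed point solution
  obtain ⟨u, v, hcu, hcv, hequ, heqv⟩ := mealy_fixed_point Fc Gc L hL0 hFcC hGcC hFcL hGcL
    ub vb hub_cont hvb_cont C0 hub_b hvb_b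
  -- continuity of sections
  have hcu_sec : ∀ x : ℝ, Continuous fun t : ℝ => u x t := by
    intro x
    have := hcu.comp ((continuous_const.prodMk continuous_id) :
      Continuous fun t : ℝ => ((x, t) : ℝ × ℝ))
    simpa [Function.comp_def] using this
  have hcv_sec : ∀ x : ℝ, Continuous fun t : ℝ => v x t := by
    intro x
    have := hcv.comp ((continuous_const.prodMk continuous_id) :
      Continuous fun t : ℝ => ((x, t) : ℝ × ℝ))
    simpa [Function.comp_def] using this
  have hcu_sec2 : ∀ s : ℝ, Continuous fun y : ℝ => u y s := by
    intro s
    have := hcu.comp ((continuous_id.prodMk continuous_const) :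
      Continuous fun y : ℝ => ((y, s) : ℝ × ℝ))
    simpa [Function.comp_def] using this
  have hcv_sec2 : ∀ s : ℝ, Continuous fun y : ℝ => v y s := by
    intro s
    have := hcv.comp ((continuous_id.prodMk continuous_const) :
      Continuous fun y : ℝ => ((y, s) : ℝ × ℝ))
    simpa [Function.comp_def] using this
  -- integrands
  set dI : ℝ → ℝ → ℝ := fun x t => Fc (v x t) (u x t) - u x t with hdI
  set dJ : ℝ → ℝ → ℝ := fun s y => Gc (v y s) (u y s) - v y s with hdJ
  have hdIc : ∀ x, Continuous (dI x) := by
    intro x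
    have h1 := hFcC.comp ((hcv_sec x).prodMk (hcu_sec x))
    exact ((by simpa [Function.comp_def] using h1 :
      Continuous fun t => Fc (v x t) (u x t)).sub (hcu_sec x))
  have hdJc : ∀ s, Continuous (dJ s) := by
    intro s
    have h1 := hGcC.comp ((hcv_sec2 s).prodMk (hcu_sec2 s))
    exact ((by simpa [Function.comp_def] using h1 :
      Continuous fun y => Gc (v y s) (u y s)).sub (hcv_sec2 s))
  -- primitives and derivatives
  have hprimu : ∀ x s : ℝ,
      HasDerivAt (fun s' => ub (max x 0) + ∫ t in (0:ℝ)..s', dI x t) (dI x s) s := by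
    intro x s
    exact (intervalIntegral.integral_hasDerivAt_right ((hdIc x).intervalIntegrable _ _)
      ((hdIc x).stronglyMeasurableAtFilter _ _) (hdIc x).continuousAt).const_add _
  have hprimv : ∀ s x : ℝ,
      HasDerivAt (fun x' => vb (max s 0) + ∫ y in (0:ℝ)..x', dJ s y) (dJ s x) x := by
    intro s x
    exact (intervalIntegral.integral_hasDerivAt_right ((hdJc s).intervalIntegrable _ _)
      ((hdJc s).stronglyMeasurableAtFilter _ _) (hdJc s).continuousAt).const_add _
  have hu_eqOn : ∀ x : ℝ, ∀ s' : ℝ, 0 ≤ s' →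
      u x s' = ub (max x 0) + ∫ t in (0:ℝ)..s', dI x t := by
    intro x s' hs'
    rw [hequ x s', max_eq_left hs']
  have hv_eqOn : ∀ s : ℝ, ∀ x' : ℝ, 0 ≤ x' →
      v x' s = vb (max s 0) + ∫ y in (0:ℝ)..x', dJ s y := by
    intro s x' hx'
    rw [heqv x' s, max_eq_left hx']
  have hu_dwithin : ∀ x s : ℝ, 0 ≤ s →
      HasDerivWithinAt (fun s' => u x s') (dI x s) (Ici 0) s := by
    intro x s hs
    exact ((hprimu x s).hasDerivWithinAt).congr
      (fun y hy => hu_eqOn x y hy) (hu_eqOn x s hs)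
  have hv_dwithin : ∀ s x : ℝ, 0 ≤ x →
      HasDerivWithinAt (fun x' => v x' s) (dJ s x) (Ici 0) x := by
    intro s x hx
    exact ((hprimv s x).hasDerivWithinAt).congr
      (fun y hy => hv_eqOn s y hy) (hv_eqOn s x hx)
  have hu_dAt : ∀ x s : ℝ, 0 < s → HasDerivAt (fun s' => u x s') (dI x s) s := by
    intro x s hs
    apply (hprimu x s).congr_of_eventuallyEq
    filter_upwards [isOpen_Ioi.mem_nhds hs] with y hy
    exact hu_eqOn x y (le_of_lt hy)
  have hv_dAt : ∀ s x : ℝ, 0 < x → HasDerivAt (fun x' => v x' s) (dJ s x) x := by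
    intro s x hx
    apply (hprimv s x).congr_of_eventuallyEq
    filter_upwards [isOpen_Ioi.mem_nhds hx] with y hy
    exact hv_eqOn s y (le_of_lt hy)
  -- initial values
  have hu0val : ∀ x : ℝ, 0 ≤ x → u x 0 = u₀ x := by
    intro x hx
    rw [hequ x 0]
    have e0 : max (0:ℝ) 0 = 0 := max_self 0
    rw [e0, intervalIntegral.integral_same, add_zero]
    simp only [hubdef]
    rw [max_eq_left (le_max_right x 0), max_eq_left hx]
  have hv0val : ∀ s : ℝ, 0 ≤ s → v 0 s = v₀ s := by
    intro s hs
    rw [heqv 0 s]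
    have e0 : max (0:ℝ) 0 = 0 := max_self 0
    rw [e0, intervalIntegral.integral_same, add_zero]
    simp only [hvbdef]
    rw [max_eq_left (le_max_right s 0), max_eq_left hs]
  -- invariance bounds
  have hbu : ∀ x : ℝ, 0 ≤ x → ∀ s : ℝ, 0 ≤ s → u x s ∈ Icc (r + q) (R - q) := by
    intro x hx
    have hup : ∀ s, 0 ≤ s → u x s ≤ R - q := by
      apply inv_upper hq (hcu_sec x) (fun s hs => hu_dAt x s hs)
      · intro s hs hge
        have h := (h2 (clamp (v x s)) (u x s) (hclamp_pos _) hge).1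
        simp only [hdI, hFcdef]
        linarith
      · rw [hu0val x hx]; exact (hu₀r x hx).2
    have hlo : ∀ s, 0 ≤ s → r + q ≤ u x s := by
      apply inv_lower hq (hcu_sec x) (fun s hs => hu_dAt x s hs)
      · intro s hs hle
        have h := (h1 (clamp (v x s)) (u x s) (hclamp_pos _) hle).1
        simp only [hdI, hFcdef]
        linarith
      · rw [hu0val x hx]; exact (hu₀r x hx).1
    intro s hs
    exact ⟨hlo s hs, hup s hs⟩
  have hbv : ∀ s : ℝ, 0 ≤ s → ∀ x : ℝ, 0 ≤ x → v x s ∈ Icc (r + q) (R - q) := by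
    intro s hs
    have hup : ∀ x, 0 ≤ x → v x s ≤ R - q := by
      apply inv_upper hq (hcv_sec2 s) (fun x hx => hv_dAt s x hx)
      · intro x hx hge
        have h := (h2 (clamp (u x s)) (v x s) (hclamp_pos _) hge).2
        simp only [hdJ, hGcdef]
        linarith
      · rw [hv0val s hs]; exact (hv₀r s hs).2
    have hlo : ∀ x, 0 ≤ x → r + q ≤ v x s := by
      apply inv_lower hq (hcv_sec2 s) (fun x hx => hv_dAt s x hx)
      · intro x hx hle
        have h := (h1 (clamp (u x s)) (v x s) (hclamp_pos _) hle).2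
        simp only [hdJ, hGcdef]
        linarith
      · rw [hv0val s hs]; exact (hv₀r s hs).1
    intro x hx
    exact ⟨hlo x hx, hup x hx⟩
  constructor
  · refine ⟨u, v, ⟨hcu.continuousOn, hcv.continuousOn,
      fun x hx => hu0val x hx, fun s hs => hv0val s hs, ?_, ?_⟩,
      fun x hx s hs => ⟨hbu x hx s hs, hbv s hs x hx⟩⟩
    · intro x hx s hs
      have hveq : clamp (v x s) = v x s := hclamp_eq _ (hbv s hs x hx)
      have h := hu_dwithin x s hs
      simp only [hdI, hFcdef] at h
      rwa [hveq] at h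
    · intro x hx s hs
      have hueq : clamp (u x s) = u x s := hclamp_eq _ (hbu x hx s hs)
      have h := hv_dwithin s x hx
      simp only [hdJ, hGcdef] at h
      rwa [hueq] at h
  · intro u1 v1 u2 v2 hsol1 hsol2
    obtain ⟨hc1u, hc1v, hi1u, hi1v, hd1u, hd1v⟩ := hsol1
    obtain ⟨hc2u, hc2v, hi2u, hi2v, hd2u, hd2v⟩ := hsol2
    -- sections of solutions are continuous on Ici 0
    have secu : ∀ w : ℝ → ℝ → ℝ,
        ContinuousOn (fun pt : ℝ × ℝ => w pt.1 pt.2) (Ici 0 ×ˢ Ici 0) →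
        ∀ x : ℝ, 0 ≤ x → ContinuousOn (fun t => w x t) (Ici 0) := by
      intro w hw x hx
      have := hw.comp ((continuous_const.prodMk continuous_id).continuousOn :
        ContinuousOn (fun t : ℝ => ((x, t) : ℝ × ℝ)) (Ici 0)) (fun t ht => ⟨hx, ht⟩)
      simpa [Function.comp_def] using this
    have secv : ∀ w : ℝ → ℝ → ℝ,
        ContinuousOn (fun pt : ℝ × ℝ => w pt.1 pt.2) (Ici 0 ×ˢ Ici 0) →
        ∀ s : ℝ, 0 ≤ s → ContinuousOn (fun y => w y s) (Ici 0) := by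
      intro w hw s hs
      have := hw.comp ((continuous_id.prodMk continuous_const).continuousOn :
        ContinuousOn (fun y : ℝ => ((y, s) : ℝ × ℝ)) (Ici 0)) (fun y hy => ⟨hy, hs⟩)
      simpa [Function.comp_def] using this
    -- integrands of the integral equations
    have dcont : ∀ (uu vv : ℝ → ℝ → ℝ),
        ContinuousOn (fun pt : ℝ × ℝ => uu pt.1 pt.2) (Ici 0 ×ˢ Ici 0) →
        ContinuousOn (fun pt : ℝ × ℝ => vv pt.1 pt.2) (Ici 0 ×ˢ Ici 0) →
        ∀ x : ℝ, 0 ≤ x →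
        ContinuousOn (fun t => f (vv x t) (uu x t) - uu x t) (Ici 0) := by
      intro uu vv huu hvv x hx
      have hpair : ContinuousOn (fun t : ℝ => ((vv x t, uu x t) : ℝ × ℝ)) (Ici 0) :=
        (secu vv hvv x hx).prodMk (secu uu huu x hx)
      have h1 : ContinuousOn (fun t => f (vv x t) (uu x t)) (Ici 0) := by
        have := hfc.comp_continuousOn hpair
        simpa [Function.comp_def] using this
      exact h1.sub (secu uu huu x hx)
    have dcont2 : ∀ (uu vv : ℝ → ℝ → ℝ),
        ContinuousOn (fun pt : ℝ × ℝ => uu pt.1 pt.2) (Ici 0 ×ˢ Ici 0) →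
        ContinuousOn (fun pt : ℝ × ℝ => vv pt.1 pt.2) (Ici 0 ×ˢ Ici 0) →
        ∀ s : ℝ, 0 ≤ s →
        ContinuousOn (fun y => g (vv y s) (uu y s) - vv y s) (Ici 0) := by
      intro uu vv huu hvv s hs
      have hpair : ContinuousOn (fun y : ℝ => ((vv y s, uu y s) : ℝ × ℝ)) (Ici 0) :=
        (secv vv hvv s hs).prodMk (secv uu huu s hs)
      have h1 : ContinuousOn (fun y => g (vv y s) (uu y s)) (Ici 0) := by
        have := hgc.comp_continuousOn hpair
        simpa [Function.comp_def] using this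
      exact h1.sub (secv vv hvv s hs)
    -- integral equations for both solutions
    have heq1u : ∀ x : ℝ, 0 ≤ x → ∀ s : ℝ, 0 ≤ s →
        u1 x s = u₀ x + ∫ t in (0:ℝ)..s, (f (v1 x t) (u1 x t) - u1 x t) := by
      intro x hx s hs
      have := sol_integral (secu u1 hc1u x hx) (dcont u1 v1 hc1u hc1v x hx)
        (fun t ht => hd1u x hx t ht) s hs
      rwa [hi1u x hx] at this
    have heq2u : ∀ x : ℝ, 0 ≤ x → ∀ s : ℝ, 0 ≤ s →
        u2 x s = u₀ x + ∫ t in (0:ℝ)..s, (f (v2 x t) (u2 x t) - u2 x t) := by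
      intro x hx s hs
      have := sol_integral (secu u2 hc2u x hx) (dcont u2 v2 hc2u hc2v x hx)
        (fun t ht => hd2u x hx t ht) s hs
      rwa [hi2u x hx] at this
    have heq1v : ∀ s : ℝ, 0 ≤ s → ∀ x : ℝ, 0 ≤ x →
        v1 x s = v₀ s + ∫ y in (0:ℝ)..x, (g (v1 y s) (u1 y s) - v1 y s) := by
      intro s hs x hx
      have := sol_integral (secv v1 hc1v s hs) (dcont2 u1 v1 hc1u hc1v s hs)
        (fun y hy => hd1v y hy s hs) x hx
      rwa [hi1v s hs] at this
    have heq2v : ∀ s : ℝ, 0 ≤ s → ∀ x : ℝ, 0 ≤ x →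
        v2 x s = v₀ s + ∫ y in (0:ℝ)..x, (g (v2 y s) (u2 y s) - v2 y s) := by
      intro s hs x hx
      have := sol_integral (secv v2 hc2v s hs) (dcont2 u2 v2 hc2u hc2v s hs)
        (fun y hy => hd2v y hy s hs) x hx
      rwa [hi2v s hs] at this
    -- difference functions
    have hc12u : ContinuousOn (fun pt : ℝ × ℝ => u1 pt.1 pt.2 - u2 pt.1 pt.2)
        (Ici 0 ×ˢ Ici 0) := hc1u.sub hc2u
    have hc12v : ContinuousOn (fun pt : ℝ × ℝ => v1 pt.1 pt.2 - v2 pt.1 pt.2)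
        (Ici 0 ×ˢ Ici 0) := hc1v.sub hc2v
    have hmaxc : ContinuousOn
        (fun pt : ℝ × ℝ => max |u1 pt.1 pt.2 - u2 pt.1 pt.2| |v1 pt.1 pt.2 - v2 pt.1 pt.2|)
        (Ici 0 ×ˢ Ici 0) := (hc12u.abs).sup (hc12v.abs)
    have hK : (0:ℝ) ≤ L + 1 := by linarith
    -- pointwise Lipschitz bounds on the integrand differences
    have hptw : ∀ x t : ℝ, |(f (v1 x t) (u1 x t) - u1 x t) - (f (v2 x t) (u2 x t) - u2 x t)|
        ≤ (L + 1) * max |u1 x t - u2 x t| |v1 x t - v2 x t| := by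
      intro x t
      have hLip := hfL (v1 x t) (u1 x t) (v2 x t) (u2 x t)
      have hmax : max |v1 x t - v2 x t| |u1 x t - u2 x t|
          ≤ max |u1 x t - u2 x t| |v1 x t - v2 x t| := by
        rw [max_comm]
      have h1 : |(f (v1 x t) (u1 x t) - u1 x t) - (f (v2 x t) (u2 x t) - u2 x t)|
          ≤ |f (v1 x t) (u1 x t) - f (v2 x t) (u2 x t)| + |u1 x t - u2 x t| := by
        have e : (f (v1 x t) (u1 x t) - u1 x t) - (f (v2 x t) (u2 x t) - u2 x t)
            = (f (v1 x t) (u1 x t) - f (v2 x t) (u2 x t)) - (u1 x t - u2 x t) := by ring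
        rw [e]
        exact abs_sub _ _
      have h2 : (Lf : ℝ) * max |v1 x t - v2 x t| |u1 x t - u2 x t|
          ≤ L * max |u1 x t - u2 x t| |v1 x t - v2 x t| :=
        mul_le_mul (le_max_left _ _) hmax (le_max_of_le_left (abs_nonneg _)) hL0
      have h3 : |u1 x t - u2 x t| ≤ max |u1 x t - u2 x t| |v1 x t - v2 x t| := le_max_left _ _
      have h4 := le_trans hLip h2
      calc |(f (v1 x t) (u1 x t) - u1 x t) - (f (v2 x t) (u2 x t) - u2 x t)|
          ≤ L * max |u1 x t - u2 x t| |v1 x t - v2 x t|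
            + max |u1 x t - u2 x t| |v1 x t - v2 x t| := by linarith
      _ = (L + 1) * max |u1 x t - u2 x t| |v1 x t - v2 x t| := by ring
    have hptw2 : ∀ y s : ℝ, |(g (v1 y s) (u1 y s) - v1 y s) - (g (v2 y s) (u2 y s) - v2 y s)|
        ≤ (L + 1) * max |u1 y s - u2 y s| |v1 y s - v2 y s| := by
      intro y s
      have hLip := hgL (v1 y s) (u1 y s) (v2 y s) (u2 y s)
      have hmax : max |v1 y s - v2 y s| |u1 y s - u2 y s|
          ≤ max |u1 y s - u2 y s| |v1 y s - v2 y s| := by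
        rw [max_comm]
      have h1 : |(g (v1 y s) (u1 y s) - v1 y s) - (g (v2 y s) (u2 y s) - v2 y s)|
          ≤ |g (v1 y s) (u1 y s) - g (v2 y s) (u2 y s)| + |v1 y s - v2 y s| := by
        have e : (g (v1 y s) (u1 y s) - v1 y s) - (g (v2 y s) (u2 y s) - v2 y s)
            = (g (v1 y s) (u1 y s) - g (v2 y s) (u2 y s)) - (v1 y s - v2 y s) := by ring
        rw [e]
        exact abs_sub _ _
      have h2 : (Lg : ℝ) * max |v1 y s - v2 y s| |u1 y s - u2 y s|
          ≤ L * max |u1 y s - u2 y s| |v1 y s - v2 y s| :=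
        mul_le_mul (le_max_right _ _) hmax (le_max_of_le_left (abs_nonneg _)) hL0
      have h3 : |v1 y s - v2 y s| ≤ max |u1 y s - u2 y s| |v1 y s - v2 y s| := le_max_right _ _
      have h4 := le_trans hLip h2
      calc |(g (v1 y s) (u1 y s) - v1 y s) - (g (v2 y s) (u2 y s) - v2 y s)|
          ≤ L * max |u1 y s - u2 y s| |v1 y s - v2 y s|
            + max |u1 y s - u2 y s| |v1 y s - v2 y s| := by linarith
      _ = (L + 1) * max |u1 y s - u2 y s| |v1 y s - v2 y s| := by ring
    -- the Gronwall hypotheses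
    have hGu : ∀ x s : ℝ, 0 ≤ x → 0 ≤ s →
        |u1 x s - u2 x s| ≤ (L + 1) *
          ∫ t in (0:ℝ)..s, max |u1 x t - u2 x t| |v1 x t - v2 x t| := by
      intro x s hx hs
      have hsub : Icc (0:ℝ) s ⊆ Ici 0 := fun z hz => hz.1
      have hint1 : IntervalIntegrable (fun t => f (v1 x t) (u1 x t) - u1 x t) volume 0 s :=
        ((dcont u1 v1 hc1u hc1v x hx).mono (by rw [uIcc_of_le hs]; exact hsub)).intervalIntegrable
      have hint2 : IntervalIntegrable (fun t => f (v2 x t) (u2 x t) - u2 x t) volume 0 s :=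
        ((dcont u2 v2 hc2u hc2v x hx).mono (by rw [uIcc_of_le hs]; exact hsub)).intervalIntegrable
      have hdiff : u1 x s - u2 x s = ∫ t in (0:ℝ)..s,
          ((f (v1 x t) (u1 x t) - u1 x t) - (f (v2 x t) (u2 x t) - u2 x t)) := by
        rw [intervalIntegral.integral_sub hint1 hint2, heq1u x hx s hs, heq2u x hx s hs]
        ring
      have hmaxsec : ContinuousOn (fun t => max |u1 x t - u2 x t| |v1 x t - v2 x t|) (Ici 0) :=
        (((secu u1 hc1u x hx).sub (secu u2 hc2u x hx)).abs).sup
          (((secu v1 hc1v x hx).sub (secu v2 hc2v x hx)).abs)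
      have hintm : IntervalIntegrable
          (fun t => max |u1 x t - u2 x t| |v1 x t - v2 x t|) volume 0 s :=
        (hmaxsec.mono (by rw [uIcc_of_le hs]; exact hsub)).intervalIntegrable
      have hintd : IntervalIntegrable (fun t =>
          |(f (v1 x t) (u1 x t) - u1 x t) - (f (v2 x t) (u2 x t) - u2 x t)|) volume 0 s :=
        (hint1.sub hint2).abs
      calc |u1 x s - u2 x s|
          = |∫ t in (0:ℝ)..s, ((f (v1 x t) (u1 x t) - u1 x t)
              - (f (v2 x t) (u2 x t) - u2 x t))| := by rw [hdiff]
      _ ≤ ∫ t in (0:ℝ)..s, |(f (v1 x t) (u1 x t) - u1 x t)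
              - (f (v2 x t) (u2 x t) - u2 x t)| :=
            intervalIntegral.abs_integral_le_integral_abs hs
      _ ≤ ∫ t in (0:ℝ)..s, (L + 1) * max |u1 x t - u2 x t| |v1 x t - v2 x t| := by
            apply intervalIntegral.integral_mono_on hs hintd (hintm.const_mul _)
            intro t _
            exact hptw x t
      _ = (L + 1) * ∫ t in (0:ℝ)..s, max |u1 x t - u2 x t| |v1 x t - v2 x t| :=
            intervalIntegral.integral_const_mul _ _
    have hGv : ∀ x s : ℝ, 0 ≤ x → 0 ≤ s →
        |v1 x s - v2 x s| ≤ (L + 1) *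
          ∫ y in (0:ℝ)..x, max |u1 y s - u2 y s| |v1 y s - v2 y s| := by
      intro x s hx hs
      have hsub : Icc (0:ℝ) x ⊆ Ici 0 := fun z hz => hz.1
      have hint1 : IntervalIntegrable (fun y => g (v1 y s) (u1 y s) - v1 y s) volume 0 x :=
        ((dcont2 u1 v1 hc1u hc1v s hs).mono (by rw [uIcc_of_le hx]; exact hsub)).intervalIntegrable
      have hint2 : IntervalIntegrable (fun y => g (v2 y s) (u2 y s) - v2 y s) volume 0 x :=
        ((dcont2 u2 v2 hc2u hc2v s hs).mono (by rw [uIcc_of_le hx]; exact hsub)).intervalIntegrable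
      have hdiff : v1 x s - v2 x s = ∫ y in (0:ℝ)..x,
          ((g (v1 y s) (u1 y s) - v1 y s) - (g (v2 y s) (u2 y s) - v2 y s)) := by
        rw [intervalIntegral.integral_sub hint1 hint2, heq1v s hs x hx, heq2v s hs x hx]
        ring
      have hmaxsec : ContinuousOn (fun y => max |u1 y s - u2 y s| |v1 y s - v2 y s|) (Ici 0) :=
        (((secv u1 hc1u s hs).sub (secv u2 hc2u s hs)).abs).sup
          (((secv v1 hc1v s hs).sub (secv v2 hc2v s hs)).abs)
      have hintm : IntervalIntegrable
          (fun y => max |u1 y s - u2 y s| |v1 y s - v2 y s|) volume 0 x :=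
        (hmaxsec.mono (by rw [uIcc_of_le hx]; exact hsub)).intervalIntegrable
      have hintd : IntervalIntegrable (fun y =>
          |(g (v1 y s) (u1 y s) - v1 y s) - (g (v2 y s) (u2 y s) - v2 y s)|) volume 0 x :=
        (hint1.sub hint2).abs
      calc |v1 x s - v2 x s|
          = |∫ y in (0:ℝ)..x, ((g (v1 y s) (u1 y s) - v1 y s)
              - (g (v2 y s) (u2 y s) - v2 y s))| := by rw [hdiff]
      _ ≤ ∫ y in (0:ℝ)..x, |(g (v1 y s) (u1 y s) - v1 y s)
              - (g (v2 y s) (u2 y s) - v2 y s)| :=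
            intervalIntegral.abs_integral_le_integral_abs hx
      _ ≤ ∫ y in (0:ℝ)..x, (L + 1) * max |u1 y s - u2 y s| |v1 y s - v2 y s| := by
            apply intervalIntegral.integral_mono_on hx hintd (hintm.const_mul _)
            intro y _
            exact hptw2 y s
      _ = (L + 1) * ∫ y in (0:ℝ)..x, max |u1 y s - u2 y s| |v1 y s - v2 y s| :=
            intervalIntegral.integral_const_mul _ _
    have main := gronwall2d (Du := fun x s => u1 x s - u2 x s)
      (Dv := fun x s => v1 x s - v2 x s) hK hc12u hc12v hGu hGv
    intro x hx s hs
    obtain ⟨e1, e2⟩ := main x s hx hs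
    exact ⟨sub_eq_zero.1 e1, sub_eq_zero.1 e2⟩
end

section
/- Let f, g : ℝ² → ℝ be differentiable and let u, v : [0,∞) × [0,∞) → ℝ be C² functions satisfying ∂u/∂s = f(v,u) − u and ∂v/∂x = g(v,u) − v everywhere. Suppose there are constants 0 < c ≤ a with −a ≤ (∂f/∂u)(v,u) − 1 ≤ −c and −a ≤ (∂g/∂v)(v,u) − 1 ≤ −c for all (v,u) ∈ ℝ², and constants b, d ≥ 0 with |(∂f/∂v)(v(x,s),u(x,s))·(g(v(x,s),u(x,s)) − v(x,s))| ≤ b and |(∂g/∂u)(v(x,s),u(x,s))·(f(v(x,s),u(x,s)) − u(x,s))| ≤ d for all (x,s). Then for all (x,s): |∂u/∂x(x,s)| ≤ b/c + (|∂u/∂x(x,0)| − b/c)·exp(−c·s) and |∂v/∂s(x,s)| ≤ d/c + (|∂v/∂s(0,s)| − d/c)·exp(−c·x). In particular, if |∂u/∂x(·,0)| and |∂v/∂s(0,·)| are bounded on [0,∞), then ∂u/∂x and ∂v/∂s are uniformly bounded on [0,∞) × [0,∞). -/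
open Filter Set Real Topology Function

private lemma abs_le_gronwall' {c b : ℝ} (hc : 0 < c)
    (w lam rem : ℝ → ℝ)
    (hw : ∀ t, 0 ≤ t → HasDerivAt w (lam t * w t + rem t) t)
    (hlam : ∀ t, 0 ≤ t → lam t ≤ -c)
    (hrem : ∀ t, 0 ≤ t → |rem t| ≤ b) :
    ∀ s, 0 ≤ s → |w s| ≤ b / c + (|w 0| - b / c) * Real.exp (-c * s) := by
  intro s hs
  have hcont : ContinuousOn (fun t => |w t|) (Icc 0 s) := by
    apply ContinuousOn.abs
    intro t ht
    exact (hw t ht.1).continuousAt.continuousWithinAt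
  have hf' : ∀ t ∈ Ico 0 s, ∀ r, -c * |w t| + b < r →
      ∃ᶠ z in 𝓝[>] t, (z - t)⁻¹ * (|w z| - |w t|) < r := by
    intro t ht r hr
    have hd := hw t ht.1
    have hslope : Tendsto (slope w t) (𝓝[>] t) (𝓝 (lam t * w t + rem t)) :=
      (hasDerivAt_iff_tendsto_slope.1 hd).mono_left
        (nhdsWithin_mono t (fun z hz => ne_of_gt hz))
    rcases lt_trichotomy (w t) 0 with hwt | hwt | hwt
    · have hlt : -(lam t * w t + rem t) < r := by
        have h1 : -(lam t * w t) = lam t * |w t| := by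
          rw [abs_of_neg hwt]; ring
        have h2 : lam t * |w t| ≤ -c * |w t| :=
          mul_le_mul_of_nonneg_right (hlam t ht.1) (abs_nonneg _)
        have h3 : -rem t ≤ b := neg_le.1 (abs_le.1 (hrem t ht.1)).1
        nlinarith
      have hev : ∀ᶠ z in 𝓝[>] t, (z - t)⁻¹ * (|w z| - |w t|) = -(slope w t z) := by
        have hwz : ∀ᶠ z in 𝓝 t, w z < 0 :=
          hd.continuousAt (Iio_mem_nhds hwt)
        filter_upwards [nhdsWithin_le_nhds hwz] with z hz
        rw [abs_of_neg hz, abs_of_neg hwt, slope_def_field]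
        field_simp
        ring
      have : Tendsto (fun z => (z - t)⁻¹ * (|w z| - |w t|)) (𝓝[>] t)
          (𝓝 (-(lam t * w t + rem t))) :=
        (hslope.neg).congr' (hev.mono fun z hz => hz.symm)
      exact ((this.eventually (eventually_lt_nhds hlt)).frequently)
    · have hlt : |lam t * w t + rem t| < r := by
        rw [hwt, mul_zero, zero_add]
        rw [hwt, abs_zero, mul_zero, zero_add] at hr
        exact lt_of_le_of_lt (hrem t ht.1) hr
      have hev : ∀ᶠ z in 𝓝[>] t, (z - t)⁻¹ * (|w z| - |w t|) = |slope w t z| := by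
        filter_upwards [self_mem_nhdsWithin] with z hz
        rw [hwt, abs_zero, sub_zero, slope_def_field, hwt, sub_zero,
          abs_div, abs_of_pos (sub_pos.2 hz)]
        field_simp
      have : Tendsto (fun z => (z - t)⁻¹ * (|w z| - |w t|)) (𝓝[>] t)
          (𝓝 (|lam t * w t + rem t|)) :=
        (hslope.abs).congr' (hev.mono fun z hz => hz.symm)
      exact ((this.eventually (eventually_lt_nhds hlt)).frequently)
    · have hlt : lam t * w t + rem t < r := by
        have h2 : lam t * |w t| ≤ -c * |w t| :=
          mul_le_mul_of_nonneg_right (hlam t ht.1) (abs_nonneg _)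
        rw [abs_of_pos hwt] at h2
        have h3 : rem t ≤ b := (abs_le.1 (hrem t ht.1)).2
        have : |w t| = w t := abs_of_pos hwt
        nlinarith
      have hev : ∀ᶠ z in 𝓝[>] t, (z - t)⁻¹ * (|w z| - |w t|) = slope w t z := by
        have hwz : ∀ᶠ z in 𝓝 t, 0 < w z :=
          hd.continuousAt (Ioi_mem_nhds hwt)
        filter_upwards [nhdsWithin_le_nhds hwz] with z hz
        rw [abs_of_pos hz, abs_of_pos hwt, slope_def_field]
        field_simp
      have : Tendsto (fun z => (z - t)⁻¹ * (|w z| - |w t|)) (𝓝[>] t)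
          (𝓝 (lam t * w t + rem t)) :=
        hslope.congr' (hev.mono fun z hz => hz.symm)
      exact ((this.eventually (eventually_lt_nhds hlt)).frequently)
  have bound : ∀ t ∈ Ico 0 s, -c * |w t| + b ≤ -c * |w t| + b := fun t _ => le_rfl
  have := le_gronwallBound_of_liminf_deriv_right_le (f := fun t => |w t|)
    (f' := fun t => -c * |w t| + b) (δ := |w 0|) (K := -c) (ε := b)
    hcont hf' le_rfl bound s ⟨hs, le_rfl⟩
  rw [gronwallBound_of_K_ne_0 (by linarith : (-c) ≠ 0)] at this
  calc |w s| ≤ |w 0| * exp (-c * (s - 0)) + b / (-c) * (exp (-c * (s - 0)) - 1) := this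
    _ = b / c + (|w 0| - b / c) * Real.exp (-c * s) := by
        rw [sub_zero, div_neg]; ring

private lemma fderiv_apply_pair' (f : ℝ → ℝ → ℝ) (hf : Differentiable ℝ (Function.uncurry f))
    (p q : ℝ) (α β : ℝ) :
    fderiv ℝ (Function.uncurry f) (p, q) (α, β)
      = α * deriv (fun w => f w q) p + β * deriv (fun w => f p w) q := by
  have h1 : HasDerivAt (fun y => f y q) (fderiv ℝ (Function.uncurry f) (p, q) (1, 0)) p := by
    have := (hf (p, q)).hasFDerivAt.comp_hasDerivAt p
      ((hasDerivAt_id p).prodMk (hasDerivAt_const p q))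
    simpa [Function.comp_def] using this
  have h2 : HasDerivAt (fun y => f p y) (fderiv ℝ (Function.uncurry f) (p, q) (0, 1)) q := by
    have := (hf (p, q)).hasFDerivAt.comp_hasDerivAt q
      ((hasDerivAt_const q p).prodMk (hasDerivAt_id q))
    simpa [Function.comp_def] using this
  have e : ((α : ℝ), (β : ℝ)) = α • ((1:ℝ), (0:ℝ)) + β • ((0:ℝ), (1:ℝ)) := by
    simp [Prod.ext_iff]
  rw [e, map_add, map_smul, map_smul, h1.deriv, h2.deriv]
  simp [smul_eq_mul]

private lemma main_est (f g : ℝ → ℝ → ℝ)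
    (hf : Differentiable ℝ (Function.uncurry f))
    (u v : ℝ → ℝ → ℝ)
    (hu : ContDiff ℝ 2 (fun pt : ℝ × ℝ => u pt.1 pt.2))
    (hueq : ∀ x s : ℝ, 0 ≤ x → 0 ≤ s →
      HasDerivAt (fun s' => u x s') (f (v x s) (u x s) - u x s) s)
    (hveq : ∀ x s : ℝ, 0 ≤ x → 0 ≤ s →
      HasDerivAt (fun x' => v x' s) (g (v x s) (u x s) - v x s) x)
    (c : ℝ) (hc : 0 < c)
    (hfu : ∀ v' u' : ℝ, deriv (fun w => f v' w) u' - 1 ≤ -c)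
    (b : ℝ)
    (hbbound : ∀ x s : ℝ, 0 ≤ x → 0 ≤ s →
      |deriv (fun w => f w (u x s)) (v x s) * (g (v x s) (u x s) - v x s)| ≤ b) :
    ∀ x s : ℝ, 0 ≤ x → 0 ≤ s →
      |deriv (fun x' => u x' s) x|
          ≤ b / c + (|deriv (fun x' => u x' 0) x| - b / c) * Real.exp (-c * s) := by
  set U : ℝ × ℝ → ℝ := fun p => u p.1 p.2 with hUdef
  have hUdiff : Differentiable ℝ U := (hu.of_le one_le_two).differentiable (by norm_num)
  set F : ℝ × ℝ → (ℝ × ℝ) →L[ℝ] ℝ := fderiv ℝ U with hFdef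
  have hF : ContDiff ℝ 1 F := hu.fderiv_right (by norm_num)
  have hFdiff : Differentiable ℝ F := hF.differentiable (by norm_num)
  set w : ℝ → ℝ → ℝ := fun x s => F (x, s) (1, 0) with hwdef
  have stepA : ∀ x s : ℝ, HasDerivAt (fun x' => u x' s) (w x s) x := by
    intro x s
    have := (hUdiff (x, s)).hasFDerivAt.comp_hasDerivAt x
      ((hasDerivAt_id x).prodMk (hasDerivAt_const x s))
    simpa [Function.comp_def] using this
  have stepA2 : ∀ x s : ℝ, HasDerivAt (fun s' => u x s') (F (x, s) (0, 1)) s := by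
    intro x s
    have := (hUdiff (x, s)).hasFDerivAt.comp_hasDerivAt s
      ((hasDerivAt_const s x).prodMk (hasDerivAt_id s))
    simpa [Function.comp_def] using this
  have stepB : ∀ x s : ℝ, 0 ≤ x → 0 ≤ s →
      F (x, s) (0, 1) = f (v x s) (u x s) - u x s := by
    intro x s hx hs
    exact (stepA2 x s).unique (hueq x s hx hs)
  have stepF : ∀ x s : ℝ, 0 ≤ x → 0 ≤ s →
      HasDerivAt (fun s' => w x s')
        ((deriv (fun y => f (v x s) y) (u x s) - 1) * w x s
          + deriv (fun y => f y (u x s)) (v x s) * (g (v x s) (u x s) - v x s)) s := by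
    intro x s hx hs
    set S : (ℝ × ℝ) →L[ℝ] (ℝ × ℝ) →L[ℝ] ℝ := fderiv ℝ F (x, s) with hSdef
    have hsym : S (0, 1) (1, 0) = S (1, 0) (0, 1) :=
      second_derivative_symmetric (fun y => (hUdiff y).hasFDerivAt)
        (hFdiff (x, s)).hasFDerivAt (0, 1) (1, 0)
    have hD : HasDerivAt (fun s' => w x s') (S (0, 1) (1, 0)) s := by
      have hcomp : HasDerivAt (fun s' => F (x, s')) (S (0, 1)) s := by
        have := (hFdiff (x, s)).hasFDerivAt.comp_hasDerivAt s
          ((hasDerivAt_const s x).prodMk (hasDerivAt_id s))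
        simpa [Function.comp_def] using this
      have := hcomp.clm_apply (hasDerivAt_const s ((1:ℝ), (0:ℝ)))
      simpa using this
    have hG : HasDerivAt (fun x' => F (x', s) (0, 1)) (S (1, 0) (0, 1)) x := by
      have hcomp : HasDerivAt (fun x' => F (x', s)) (S (1, 0)) x := by
        have := (hFdiff (x, s)).hasFDerivAt.comp_hasDerivAt x
          ((hasDerivAt_id x).prodMk (hasDerivAt_const x s))
        simpa [Function.comp_def] using this
      have := hcomp.clm_apply (hasDerivAt_const x ((0:ℝ), (1:ℝ)))
      simpa using this
    set D : ℝ := (g (v x s) (u x s) - v x s) * deriv (fun y => f y (u x s)) (v x s)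
      + w x s * deriv (fun y => f (v x s) y) (u x s) - w x s with hDdef
    have hR : HasDerivAt (fun x' => f (v x' s) (u x' s) - u x' s) D x := by
      have hpair : HasDerivAt (fun x' => ((v x' s), (u x' s)))
          ((g (v x s) (u x s) - v x s), w x s) x :=
        (hveq x s hx hs).prodMk (stepA x s)
      have hfc : HasDerivAt (fun x' => f (v x' s) (u x' s))
          (fderiv ℝ (Function.uncurry f) (v x s, u x s)
            ((g (v x s) (u x s) - v x s), w x s)) x := by
        have := (hf (v x s, u x s)).hasFDerivAt.comp_hasDerivAt x hpair
        simpa [Function.comp_def, Function.uncurry] using this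
      have := hfc.sub (stepA x s)
      rw [fderiv_apply_pair' f hf] at this
      exact this
    have hkey : S (1, 0) (0, 1) = D := by
      have h1 : HasDerivWithinAt (fun x' => f (v x' s) (u x' s) - u x' s)
          (S (1, 0) (0, 1)) (Ici x) x := by
        apply hG.hasDerivWithinAt.congr
        · intro y hy
          exact (stepB y s (le_trans hx hy) hs).symm
        · exact (stepB x s hx hs).symm
      exact (h1.derivWithin (uniqueDiffOn_Ici x x self_mem_Ici)).symm.trans
        (hR.hasDerivWithinAt.derivWithin (uniqueDiffOn_Ici x x self_mem_Ici))
    have : HasDerivAt (fun s' => w x s') D s := by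
      rw [← hkey, ← hsym]; exact hD
    convert this using 1
    rw [hDdef]; ring
  intro x s hx hs
  rw [(stepA x s).deriv, (stepA x 0).deriv]
  exact abs_le_gronwall' hc (fun s' => w x s')
    (fun s' => deriv (fun y => f (v x s') y) (u x s') - 1)
    (fun s' => deriv (fun y => f y (u x s')) (v x s') * (g (v x s') (u x s') - v x s'))
    (fun t ht => stepF x t hx ht)
    (fun t _ => hfu (v x t) (u x t))
    (fun t ht => hbbound x t hx ht) s hs



/-- energy estimates with negative coefficients for the hyperbolic Mealy
system `∂u/∂s = f(v,u) − u`, `∂v/∂x = g(v,u) − v` (first argument of `f`, `g` is `v`).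
If `−a ≤ ∂f/∂u − 1 ≤ −c` and `−a ≤ ∂g/∂v − 1 ≤ −c` everywhere with `0 < c ≤ a`, and
`|∂f/∂v · (g − v)| ≤ b`, `|∂g/∂u · (f − u)| ≤ d` along the solution, then `∂u/∂x` and
`∂v/∂s` satisfy exponential decay estimates; in particular they are uniformly bounded
if they are bounded on the initial axes. -/
theorem statement19 (f g : ℝ → ℝ → ℝ)
    (hf : Differentiable ℝ (Function.uncurry f))
    (hg : Differentiable ℝ (Function.uncurry g))
    (u v : ℝ → ℝ → ℝ)
    (hu : ContDiff ℝ 2 (fun pt : ℝ × ℝ => u pt.1 pt.2))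
    (hv : ContDiff ℝ 2 (fun pt : ℝ × ℝ => v pt.1 pt.2))
    (hueq : ∀ x s : ℝ, 0 ≤ x → 0 ≤ s →
      HasDerivAt (fun s' => u x s') (f (v x s) (u x s) - u x s) s)
    (hveq : ∀ x s : ℝ, 0 ≤ x → 0 ≤ s →
      HasDerivAt (fun x' => v x' s) (g (v x s) (u x s) - v x s) x)
    (a c : ℝ) (hc : 0 < c) (hca : c ≤ a)
    (hfu : ∀ v' u' : ℝ, -a ≤ deriv (fun w => f v' w) u' - 1 ∧ deriv (fun w => f v' w) u' - 1 ≤ -c)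
    (hgv : ∀ v' u' : ℝ, -a ≤ deriv (fun w => g w u') v' - 1 ∧ deriv (fun w => g w u') v' - 1 ≤ -c)
    (b d : ℝ) (hb : 0 ≤ b) (hd : 0 ≤ d)
    (hbbound : ∀ x s : ℝ, 0 ≤ x → 0 ≤ s →
      |deriv (fun w => f w (u x s)) (v x s) * (g (v x s) (u x s) - v x s)| ≤ b)
    (hdbound : ∀ x s : ℝ, 0 ≤ x → 0 ≤ s →
      |deriv (fun w => g (v x s) w) (u x s) * (f (v x s) (u x s) - u x s)| ≤ d) :
    (∀ x s : ℝ, 0 ≤ x → 0 ≤ s →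
      |deriv (fun x' => u x' s) x|
          ≤ b / c + (|deriv (fun x' => u x' 0) x| - b / c) * Real.exp (-c * s) ∧
      |deriv (fun s' => v x s') s|
          ≤ d / c + (|deriv (fun s' => v 0 s') s| - d / c) * Real.exp (-c * x)) ∧
    ((∃ A : ℝ, ∀ x : ℝ, 0 ≤ x → |deriv (fun x' => u x' 0) x| ≤ A) →
     (∃ B : ℝ, ∀ s : ℝ, 0 ≤ s → |deriv (fun s' => v 0 s') s| ≤ B) →
     ∃ K : ℝ, ∀ x s : ℝ, 0 ≤ x → 0 ≤ s →
       |deriv (fun x' => u x' s) x| ≤ K ∧ |deriv (fun s' => v x s') s| ≤ K) := by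
  have hu1 := main_est f g hf u v hu hueq hveq c hc (fun v' u' => (hfu v' u').2) b hbbound
  have hv1 := main_est (fun p q => g q p) (fun p q => f q p)
      (hg.comp (differentiable_snd.prodMk differentiable_fst))
      (fun x s => v s x) (fun x s => u s x)
      (hv.comp (contDiff_snd.prodMk contDiff_fst))
      (fun x s hx hs => hveq s x hs hx)
      (fun x s hx hs => hueq s x hs hx)
      c hc (fun v' u' => (hgv u' v').2) d
      (fun x s hx hs => hdbound s x hs hx)
  have hbc : (0:ℝ) ≤ b / c := div_nonneg hb hc.le
  have hdc : (0:ℝ) ≤ d / c := div_nonneg hd hc.le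
  refine ⟨fun x s hx hs => ⟨hu1 x s hx hs, hv1 s x hs hx⟩, ?_⟩
  rintro ⟨A, hA⟩ ⟨B, hB⟩
  refine ⟨max (b / c + A) (d / c + B), fun x s hx hs => ⟨?_, ?_⟩⟩
  · have h := hu1 x s hx hs
    have hAx := hA x hx
    have hA0 : (0:ℝ) ≤ A := le_trans (abs_nonneg _) (hA 0 le_rfl)
    have he1 : Real.exp (-c * s) ≤ 1 := Real.exp_le_one_iff.2 (by nlinarith)
    have he0 : (0:ℝ) < Real.exp (-c * s) := Real.exp_pos _
    have hle : |deriv (fun x' => u x' s) x| ≤ b / c + A := by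
      rcases le_or_gt 0 (|deriv (fun x' => u x' 0) x| - b / c) with ht | ht
      · have := mul_le_mul_of_nonneg_left he1 ht
        linarith
      · have := le_of_lt (mul_neg_of_neg_of_pos ht he0)
        linarith
    exact le_trans hle (le_max_left _ _)
  · have h : |deriv (fun s' => v x s') s|
        ≤ d / c + (|deriv (fun s' => v 0 s') s| - d / c) * Real.exp (-c * x) := hv1 s x hs hx
    have hBs := hB s hs
    have hB0 : (0:ℝ) ≤ B := le_trans (abs_nonneg _) (hB 0 le_rfl)
    have he1 : Real.exp (-c * x) ≤ 1 := Real.exp_le_one_iff.2 (by nlinarith)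
    have he0 : (0:ℝ) < Real.exp (-c * x) := Real.exp_pos _
    have hle : |deriv (fun s' => v x s') s| ≤ d / c + B := by
      rcases le_or_gt 0 (|deriv (fun s' => v 0 s') s| - d / c) with ht | ht
      · have := mul_le_mul_of_nonneg_left he1 ht
        linarith
      · have := le_of_lt (mul_neg_of_neg_of_pos ht he0)
        linarith
    exact le_trans hle (le_max_right _ _)
end
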